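/- arXiv:2007.01659 — 6 statements merged into one kernel-verified Lean document; each statement's English description precedes it below -/
import Mathlib

section
/- Let (X,Y) be jointly distributed random variables with Y valued in the set e^K of K-dimensional one-hot vectors, let f be a measurable map from the input space to the probability simplex Δ^{K−1}, set Z = f(X), and let C = E[Y | Z] ∈ Δ^{K−1} be the calibration map. Then for any proper loss ℓ with divergence d(q,z) = ℓ(q,z) − ℓ(q,q), assuming all expectations exist, the expected loss decomposes as E[d(Y,Z)] = E[d(C,Z)] + E[d(Y,C)], and both terms on the right-hand side are nonnegative. -/
open MeasureTheory

/-- The one-hot vector `e_k ∈ ℝ^K`. -/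
noncomputable def oneHot (K : ℕ) (k : Fin K) : Fin K → ℝ := Pi.single k 1

/-- Extension of a loss `ℓ : e^K × Δ^{K-1} → ℝ` to first arguments in the simplex,
`ℓ(q, z) = ∑ k, q k * ℓ(e_k, z)`. -/
noncomputable def extLoss {K : ℕ} (ℓ : (Fin K → ℝ) → (Fin K → ℝ) → ℝ)
    (q z : Fin K → ℝ) : ℝ :=
  ∑ k, q k * ℓ (oneHot K k) z

/-- The divergence `d(q, z) = ℓ(q, z) - ℓ(q, q)` of a loss `ℓ`. -/
noncomputable def lossDiv {K : ℕ} (ℓ : (Fin K → ℝ) → (Fin K → ℝ) → ℝ)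
    (q z : Fin K → ℝ) : ℝ :=
  extLoss ℓ q z - extLoss ℓ q q

lemma oneHot_apply {K : ℕ} (k j : Fin K) : oneHot K k j = if j = k then 1 else 0 := by
  simp [oneHot, Pi.single_apply]

lemma oneHot_mem {K : ℕ} (k : Fin K) : oneHot K k ∈ stdSimplex ℝ (Fin K) := by
  constructor
  · intro j; rw [oneHot_apply]; split <;> norm_num
  · simp [oneHot_apply]

lemma extLoss_oneHot {K : ℕ} (ℓ : (Fin K → ℝ) → (Fin K → ℝ) → ℝ) (k : Fin K) (z : Fin K → ℝ) :
    extLoss ℓ (oneHot K k) z = ℓ (oneHot K k) z := by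
  simp [extLoss, oneHot_apply, ite_mul]

/-- DeGroot–Fienberg decomposition: for `Z = f(X)` and the calibration map
`C = E[Y | Z]`, any proper loss satisfies `E[d(Y,Z)] = E[d(C,Z)] + E[d(Y,C)]`, and both
right-hand terms are nonnegative. -/
theorem stmt0
    {Ω 𝒳 : Type*} [MeasurableSpace Ω] [MeasurableSpace 𝒳]
    (μ : Measure Ω) [IsProbabilityMeasure μ]
    (K : ℕ)
    (X : Ω → 𝒳) (hX : Measurable X)
    -- `Y` is a one-hot valued label
    (Y : Ω → Fin K → ℝ) (hY : Measurable Y)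
    (hYoh : ∀ ω, ∃ k, Y ω = oneHot K k)
    -- `f` is a measurable map into the probability simplex
    (f : 𝒳 → Fin K → ℝ) (hf : Measurable f)
    (hfΔ : ∀ x, f x ∈ stdSimplex ℝ (Fin K))
    -- `ℓ` is a proper loss
    (ℓ : (Fin K → ℝ) → (Fin K → ℝ) → ℝ)
    (hℓmeas : ∀ k, Measurable (ℓ (oneHot K k)))
    (hproper : ∀ q ∈ stdSimplex ℝ (Fin K), ∀ z ∈ stdSimplex ℝ (Fin K),
      extLoss ℓ q q ≤ extLoss ℓ q z)
    -- `Z = f(X)`, the σ-algebra generated by `Z`, and the calibration map `C = E[Y | Z]`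
    (Z : Ω → Fin K → ℝ) (hZ : Z = fun ω => f (X ω))
    (mZ : MeasurableSpace Ω) (hmZ : mZ = MeasurableSpace.comap Z inferInstance)
    (C : Ω → Fin K → ℝ) (hC : ∀ k, (fun ω => C ω k) = μ[fun ω => Y ω k | mZ])
    -- all expectations exist
    (hint1 : Integrable (fun ω => extLoss ℓ (Y ω) (Z ω)) μ)
    (hint2 : Integrable (fun ω => extLoss ℓ (Y ω) (Y ω)) μ)
    (hint3 : Integrable (fun ω => extLoss ℓ (C ω) (Z ω)) μ)
    (hint4 : Integrable (fun ω => extLoss ℓ (Y ω) (C ω)) μ)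
    (hint5 : Integrable (fun ω => extLoss ℓ (C ω) (C ω)) μ) :
    (∫ ω, lossDiv ℓ (Y ω) (Z ω) ∂μ
        = ∫ ω, lossDiv ℓ (C ω) (Z ω) ∂μ + ∫ ω, lossDiv ℓ (Y ω) (C ω) ∂μ)
      ∧ 0 ≤ ∫ ω, lossDiv ℓ (C ω) (Z ω) ∂μ
      ∧ 0 ≤ ∫ ω, lossDiv ℓ (Y ω) (C ω) ∂μ := by
  subst hZ
  subst hmZ
  have hZmeas : Measurable (fun ω => f (X ω)) := hf.comp hX
  have hm : MeasurableSpace.comap (fun ω => f (X ω)) inferInstance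
      ≤ (inferInstance : MeasurableSpace Ω) := hZmeas.comap_le
  haveI : SigmaFinite (μ.trim hm) := by
    haveI := isFiniteMeasure_trim hm (μ := μ)
    infer_instance
  have hZmZ : Measurable[(MeasurableSpace.comap (fun ω => f (X ω)) inferInstance)] (fun ω => f (X ω)) := Measurable.of_comap_le le_rfl
  have hCk : ∀ k, StronglyMeasurable[(MeasurableSpace.comap (fun ω => f (X ω)) inferInstance)] (fun ω => C ω k) := fun k =>
    (hC k) ▸ stronglyMeasurable_condExp
  have hCmZ : Measurable[(MeasurableSpace.comap (fun ω => f (X ω)) inferInstance)] C := by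
    exact @measurable_pi_lambda Ω (Fin K) (fun _ => ℝ)
      (MeasurableSpace.comap (fun ω => f (X ω)) inferInstance) _ C
      (fun k => (hCk k).measurable)
  have hCmeas : Measurable C := hCmZ.mono hm le_rfl
  -- simplex facts about Y
  have hYk01 : ∀ ω k, Y ω k = 0 ∨ Y ω k = 1 := by
    intro ω k
    obtain ⟨k', hk'⟩ := hYoh ω
    rw [hk', oneHot_apply]; split <;> simp
  have hYkint : ∀ k, Integrable (fun ω => Y ω k) μ := by
    intro k
    refine Integrable.mono (integrable_const (1 : ℝ))
      ((measurable_pi_apply k).comp hY).aestronglyMeasurable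
      (Filter.Eventually.of_forall fun ω => ?_)
    rcases hYk01 ω k with h | h <;> simp [h]
  -- key bound: ‖Y ω k * ℓ (e_k) z‖ ≤ ‖extLoss ℓ (Y ω) z‖
  have hbound : ∀ (ω : Ω) (k : Fin K) (z : Fin K → ℝ),
      ‖Y ω k * ℓ (oneHot K k) z‖ ≤ ‖extLoss ℓ (Y ω) z‖ := by
    intro ω k z
    obtain ⟨k', hk'⟩ := hYoh ω
    rw [hk', extLoss_oneHot, oneHot_apply]
    rcases eq_or_ne k k' with h | h
    · subst h; simp
    · simp [h]
  -- the swap lemma: replacing Y by C in integrals against (MeasurableSpace.comap (fun ω => f (X ω)) inferInstance)-measurable weights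
  have swap : ∀ (g : Fin K → Ω → ℝ), (∀ k, StronglyMeasurable[(MeasurableSpace.comap (fun ω => f (X ω)) inferInstance)] (g k)) →
      (∀ k, Integrable (fun ω => Y ω k * g k ω) μ) →
      ∫ ω, ∑ k, Y ω k * g k ω ∂μ = ∫ ω, ∑ k, C ω k * g k ω ∂μ := by
    intro g hg hgint
    have hfun : ∀ k, (g k * fun ω => Y ω k) = fun ω => Y ω k * g k ω := by
      intro k; funext ω; exact mul_comm _ _
    have hpull : ∀ k, (μ[(fun ω => Y ω k * g k ω) | (MeasurableSpace.comap (fun ω => f (X ω)) inferInstance)]) =ᵐ[μ] fun ω => C ω k * g k ω := by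
      intro k
      have h1 : (μ[(g k) * (fun ω => Y ω k) | (MeasurableSpace.comap (fun ω => f (X ω)) inferInstance)]) =ᵐ[μ]
          (g k) * μ[(fun ω => Y ω k) | (MeasurableSpace.comap (fun ω => f (X ω)) inferInstance)] :=
        condExp_mul_of_stronglyMeasurable_left (hg k) ((hfun k) ▸ hgint k) (hYkint k)
      rw [hfun k] at h1
      refine h1.mono fun ω hω => ?_
      simp only [Pi.mul_apply] at hω
      rw [hω, mul_comm]
      exact congrArg (· * g k ω) (congrFun (hC k) ω).symm
    have hterm : ∀ k, ∫ ω, Y ω k * g k ω ∂μ = ∫ ω, C ω k * g k ω ∂μ := by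
      intro k
      calc ∫ ω, Y ω k * g k ω ∂μ
          = ∫ ω, (μ[(fun ω => Y ω k * g k ω) | (MeasurableSpace.comap (fun ω => f (X ω)) inferInstance)]) ω ∂μ := (integral_condExp hm).symm
        _ = ∫ ω, C ω k * g k ω ∂μ := integral_congr_ae (hpull k)
    have hCint : ∀ k, Integrable (fun ω => C ω k * g k ω) μ :=
      fun k => (integrable_condExp).congr (hpull k)
    rw [integral_finset_sum _ fun k _ => hgint k,
      integral_finset_sum _ fun k _ => hCint k]
    exact Finset.sum_congr rfl fun k _ => hterm k
  -- first identity: E[l(Y,Z)] = E[l(C,Z)]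
  have eqZ : ∫ ω, extLoss ℓ (Y ω) (f (X ω)) ∂μ = ∫ ω, extLoss ℓ (C ω) (f (X ω)) ∂μ := by
    have := swap (fun k ω => ℓ (oneHot K k) (f (X ω)))
      (fun k => ((hℓmeas k).comp hZmZ).stronglyMeasurable)
      (fun k => Integrable.mono hint1
        (((measurable_pi_apply k).comp hY).mul ((hℓmeas k).comp hZmeas)).aestronglyMeasurable
        (Filter.Eventually.of_forall fun ω => hbound ω k (f (X ω))))
    simpa [extLoss] using this
  -- second identity: E[l(Y,C)] = E[l(C,C)]
  have eqC : ∫ ω, extLoss ℓ (Y ω) (C ω) ∂μ = ∫ ω, extLoss ℓ (C ω) (C ω) ∂μ := by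
    have := swap (fun k ω => ℓ (oneHot K k) (C ω))
      (fun k => ((hℓmeas k).comp hCmZ).stronglyMeasurable)
      (fun k => Integrable.mono hint4
        (((measurable_pi_apply k).comp hY).mul ((hℓmeas k).comp hCmeas)).aestronglyMeasurable
        (Filter.Eventually.of_forall fun ω => hbound ω k (C ω)))
    simpa [extLoss] using this
  -- C lands in the simplex a.e.
  have hCΔ : ∀ᵐ ω ∂μ, C ω ∈ stdSimplex ℝ (Fin K) := by
    have hnonneg : ∀ᵐ ω ∂μ, ∀ k, 0 ≤ C ω k := by
      rw [ae_all_iff]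
      intro k
      have h0 : (0 : Ω → ℝ) ≤ᵐ[μ] μ[(fun ω => Y ω k) | (MeasurableSpace.comap (fun ω => f (X ω)) inferInstance)] :=
        condExp_nonneg (Filter.Eventually.of_forall fun ω => by
          rcases hYk01 ω k with h | h <;> simp [h])
      rw [← hC k] at h0
      filter_upwards [h0] with ω hω
      simpa using hω
    have hsum : ∀ᵐ ω ∂μ, ∑ k, C ω k = 1 := by
      have h1 : (μ[(∑ k, fun ω => Y ω k : Ω → ℝ) | (MeasurableSpace.comap (fun ω => f (X ω)) inferInstance)]) =ᵐ[μ]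
          ∑ k, μ[(fun ω => Y ω k) | (MeasurableSpace.comap (fun ω => f (X ω)) inferInstance)] := condExp_finset_sum (fun k _ => hYkint k) _
      have h2 : (∑ k, fun ω => Y ω k : Ω → ℝ) = fun _ => (1 : ℝ) := by
        funext ω
        simp only [Finset.sum_apply]
        obtain ⟨k', hk'⟩ := hYoh ω
        simp [hk', oneHot_apply]
      rw [h2, condExp_const hm] at h1
      filter_upwards [h1.symm] with ω hω
      calc ∑ k, C ω k = ∑ k, (μ[(fun ω => Y ω k) | (MeasurableSpace.comap (fun ω => f (X ω)) inferInstance)]) ω :=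
            Finset.sum_congr rfl fun k _ => congrFun (hC k) ω
        _ = (∑ k, μ[(fun ω => Y ω k) | (MeasurableSpace.comap (fun ω => f (X ω)) inferInstance)]) ω := by simp [Finset.sum_apply]
        _ = 1 := hω
    filter_upwards [hnonneg, hsum] with ω h1 h2
    exact ⟨h1, h2⟩
  -- nonnegativity
  have nn1 : 0 ≤ ∫ ω, lossDiv ℓ (C ω) (f (X ω)) ∂μ := by
    refine integral_nonneg_of_ae ?_
    filter_upwards [hCΔ] with ω hω
    have := hproper (C ω) hω (f (X ω)) (hfΔ (X ω))
    simp only [lossDiv, Pi.zero_apply]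
    linarith
  have nn2 : 0 ≤ ∫ ω, lossDiv ℓ (Y ω) (C ω) ∂μ := by
    refine integral_nonneg_of_ae ?_
    filter_upwards [hCΔ] with ω hω
    obtain ⟨k', hk'⟩ := hYoh ω
    have := hproper (Y ω) (hk' ▸ oneHot_mem k') (C ω) hω
    simp only [lossDiv, Pi.zero_apply]
    linarith
  refine ⟨?_, nn1, nn2⟩
  have i1 : ∫ ω, lossDiv ℓ (Y ω) (f (X ω)) ∂μ
      = ∫ ω, extLoss ℓ (Y ω) (f (X ω)) ∂μ - ∫ ω, extLoss ℓ (Y ω) (Y ω) ∂μ :=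
    integral_sub hint1 hint2
  have i2 : ∫ ω, lossDiv ℓ (C ω) (f (X ω)) ∂μ
      = ∫ ω, extLoss ℓ (C ω) (f (X ω)) ∂μ - ∫ ω, extLoss ℓ (C ω) (C ω) ∂μ :=
    integral_sub hint3 hint5
  have i3 : ∫ ω, lossDiv ℓ (Y ω) (C ω) ∂μ
      = ∫ ω, extLoss ℓ (Y ω) (C ω) ∂μ - ∫ ω, extLoss ℓ (Y ω) (Y ω) ∂μ :=
    integral_sub hint4 hint2
  rw [i1, i2, i3, eqZ, eqC]
  ring
end

section
/- In the setting where Y | X ∼ Cat(Q(X)) with Q measurable into Δ^{K−1}, Z = f(X), and C = E[Y | Z] is the calibration map, the epistemic loss decomposes into calibration and grouping losses: for any proper loss ℓ with divergence d, assuming all expectations exist, E[d(Q,Z)] = E[d(C,Z)] + E[d(Q,C)], and both terms on the right-hand side are nonnegative. -/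
open MeasureTheory

abbrev ambMS {α : Type*} {m : MeasurableSpace α} (_ : Measure α) : MeasurableSpace α := m

/-- calibration/grouping decomposition of the epistemic loss: if
`Y | X ∼ Cat(Q(X))`, `Z = f(X)` and `C = E[Y | Z]`, then for any proper loss
`E[d(Q,Z)] = E[d(C,Z)] + E[d(Q,C)]`, and both right-hand terms are nonnegative. -/
theorem stmt2
    {Ω 𝒳 : Type*} [MeasurableSpace Ω] [MeasurableSpace 𝒳]
    (μ : Measure Ω) [IsProbabilityMeasure μ]
    (K : ℕ)
    (X : Ω → 𝒳) (hX : Measurable X)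
    -- `Y` is a one-hot valued label
    (Y : Ω → Fin K → ℝ) (hY : Measurable Y)
    (hYoh : ∀ ω, ∃ k, Y ω = oneHot K k)
    -- instance-wise class probability `Q`, measurable into the simplex
    (Q : 𝒳 → Fin K → ℝ) (hQ : Measurable Q)
    (hQΔ : ∀ x, Q x ∈ stdSimplex ℝ (Fin K))
    -- conditional label distribution: `Y | X ∼ Cat(Q(X))`
    (hcond : ∀ k, μ[fun ω => Y ω k | MeasurableSpace.comap X inferInstance]
      =ᵐ[μ] fun ω => Q (X ω) k)
    -- `f` is a measurable map into the probability simplex and `Z = f(X)`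
    (f : 𝒳 → Fin K → ℝ) (hf : Measurable f)
    (hfΔ : ∀ x, f x ∈ stdSimplex ℝ (Fin K))
    (Z : Ω → Fin K → ℝ) (hZ : Z = fun ω => f (X ω))
    -- the σ-algebra generated by `Z` and the calibration map `C = E[Y | Z]`
    (mZ : MeasurableSpace Ω) (hmZ : mZ = MeasurableSpace.comap Z inferInstance)
    (C : Ω → Fin K → ℝ) (hC : ∀ k, (fun ω => C ω k) = μ[fun ω => Y ω k | mZ])
    -- `ℓ` is a proper loss
    (ℓ : (Fin K → ℝ) → (Fin K → ℝ) → ℝ)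
    (hℓmeas : ∀ k, Measurable (ℓ (oneHot K k)))
    (hproper : ∀ q ∈ stdSimplex ℝ (Fin K), ∀ z ∈ stdSimplex ℝ (Fin K),
      extLoss ℓ q q ≤ extLoss ℓ q z)
    -- all expectations exist
    (hint1 : Integrable (fun ω => extLoss ℓ (Q (X ω)) (Z ω)) μ)
    (hint2 : Integrable (fun ω => extLoss ℓ (Q (X ω)) (Q (X ω))) μ)
    (hint3 : Integrable (fun ω => extLoss ℓ (C ω) (Z ω)) μ)
    (hint4 : Integrable (fun ω => extLoss ℓ (Q (X ω)) (C ω)) μ)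
    (hint5 : Integrable (fun ω => extLoss ℓ (C ω) (C ω)) μ) :
    (∫ ω, lossDiv ℓ (Q (X ω)) (Z ω) ∂μ
        = ∫ ω, lossDiv ℓ (C ω) (Z ω) ∂μ + ∫ ω, lossDiv ℓ (Q (X ω)) (C ω) ∂μ)
      ∧ 0 ≤ ∫ ω, lossDiv ℓ (C ω) (Z ω) ∂μ
      ∧ 0 ≤ ∫ ω, lossDiv ℓ (Q (X ω)) (C ω) ∂μ := by
  classical
  have hZmeas := hf.comp hX
  simp only [Function.comp_def] at hZmeas
  rw [← hZ] at hZmeas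
  have hmZle := hZmeas.comap_le
  rw [← hmZ] at hmZle
  have hmXle := hX.comap_le
  have hmZX : mZ ≤ MeasurableSpace.comap X inferInstance := by
    rw [hmZ, hZ]
    have : (fun ω => f (X ω)) = f ∘ X := rfl
    rw [this, ← MeasurableSpace.comap_comp]
    exact MeasurableSpace.comap_mono hf.comap_le
  -- `Z` and `C` are measurable w.r.t. `mZ`
  have hZmZ : Measurable[mZ] Z := by rw [hmZ]; exact Measurable.of_comap_le le_rfl
  have hCk_sm : ∀ k, StronglyMeasurable[mZ] (fun ω => C ω k) := fun k => by
    rw [hC k]; exact stronglyMeasurable_condExp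
  have hCmZ : Measurable[mZ] C := by
    rw [measurable_pi_iff]; exact fun k => (hCk_sm k).measurable
  -- bounds on `Q`, `Y`
  have hQ01 : ∀ x k, 0 ≤ Q x k ∧ Q x k ≤ 1 := by
    intro x k
    refine ⟨(hQΔ x).1 k, ?_⟩
    calc Q x k ≤ ∑ j, Q x j := Finset.single_le_sum (fun j _ => (hQΔ x).1 j) (Finset.mem_univ k)
    _ = 1 := (hQΔ x).2
  have hY01 : ∀ ω k, 0 ≤ Y ω k ∧ Y ω k ≤ 1 := by
    intro ω k
    obtain ⟨j, hj⟩ := hYoh ω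
    rw [hj]
    simp only [oneHot, Pi.single_apply]
    split <;> norm_num
  have hYsum : ∀ ω, ∑ k, Y ω k = 1 := by
    intro ω; obtain ⟨j, hj⟩ := hYoh ω; rw [hj]; simp [oneHot, Finset.sum_pi_single']
  -- integrability of coordinates
  have hYint : ∀ k, Integrable (fun ω => Y ω k) μ := by
    intro k
    refine ⟨((measurable_pi_apply k).comp hY).aestronglyMeasurable, ?_⟩
    refine HasFiniteIntegral.of_bounded (C := 1) (ae_of_all μ fun ω => ?_)
    rw [Real.norm_eq_abs, abs_le]
    exact ⟨by linarith [(hY01 ω k).1], (hY01 ω k).2⟩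
  have hQkint : ∀ k, Integrable (fun ω => Q (X ω) k) μ := by
    intro k
    refine ⟨((measurable_pi_apply k).comp (hQ.comp hX)).aestronglyMeasurable, ?_⟩
    refine HasFiniteIntegral.of_bounded (C := 1) (ae_of_all μ fun ω => ?_)
    rw [Real.norm_eq_abs, abs_le]
    exact ⟨by linarith [(hQ01 (X ω) k).1], (hQ01 (X ω) k).2⟩
  have hCkint : ∀ k, Integrable (fun ω => C ω k) μ := fun k => by
    rw [hC k]; exact integrable_condExp
  -- `C` lands a.e. in the simplex, with coordinates in [0,1]
  have hCk0 : ∀ k, ∀ᵐ ω ∂μ, 0 ≤ C ω k := by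
    intro k
    have h0 : (0:Ω → ℝ) ≤ᵐ[μ] μ[fun ω => Y ω k|mZ] :=
      condExp_nonneg (ae_of_all μ fun ω => (hY01 ω k).1)
    filter_upwards [h0] with ω hω
    rw [congrFun (hC k) ω]
    exact hω
  have hCk1 : ∀ k, ∀ᵐ ω ∂μ, C ω k ≤ 1 := by
    intro k
    have h1 : μ[(fun _ => (1:ℝ))|mZ] = fun _ => (1:ℝ) := condExp_const (μ := μ) hmZle (1:ℝ)
    have h2 : μ[fun ω => Y ω k|mZ] ≤ᵐ[μ] μ[(fun _ => (1:ℝ))|mZ] :=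
      condExp_mono (hYint k) (integrable_const 1) (ae_of_all μ fun ω => (hY01 ω k).2)
    rw [h1] at h2
    filter_upwards [h2] with ω e2
    rw [congrFun (hC k) ω]
    exact e2
  have hCsum : ∀ᵐ ω ∂μ, ∑ k, C ω k = 1 := by
    have hsum_eq : (fun ω => ∑ k, Y ω k) = ∑ k, (fun ω => Y ω k) := by
      funext ω; simp [Finset.sum_apply]
    have h1 : μ[fun ω => ∑ k, Y ω k|mZ] =ᵐ[μ] ∑ k, μ[fun ω => Y ω k|mZ] := by
      rw [hsum_eq]; exact condExp_finsetSum (fun k _ => hYint k) mZ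
    have h2 : μ[fun ω => ∑ k, Y ω k|mZ] =ᵐ[μ] fun _ => (1:ℝ) := by
      have : (fun ω => ∑ k, Y ω k) = fun _ => (1:ℝ) := funext fun ω => hYsum ω
      rw [this, condExp_const (μ := μ) hmZle (1:ℝ)]
    filter_upwards [h1, h2] with ω e1 e2
    have : ∑ k, C ω k = (∑ k, μ[fun ω => Y ω k|mZ]) ω := by
      rw [Finset.sum_apply]; congr 1; funext k
      exact congrFun (hC k) ω
    rw [this, ← e1, e2]
  have hCΔ : ∀ᵐ ω ∂μ, C ω ∈ stdSimplex ℝ (Fin K) := by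
    have hall : ∀ᵐ ω ∂μ, ∀ k, 0 ≤ C ω k := ae_all_iff.mpr hCk0
    filter_upwards [hall, hCsum] with ω h1 h2
    exact ⟨h1, h2⟩
  have hC01ae : ∀ᵐ ω ∂μ, ∀ k, 0 ≤ C ω k ∧ C ω k ≤ 1 := by
    rw [ae_all_iff]
    intro k
    filter_upwards [hCk0 k, hCk1 k] with ω h1 h2
    exact ⟨h1, h2⟩
  -- the lower-bound constant for each `ℓ(e_k, ·)` on the simplex
  set c : Fin K → ℝ := fun k => ℓ (oneHot K k) (oneHot K k) with hc
  have hlb : ∀ k, ∀ z ∈ stdSimplex ℝ (Fin K), c k ≤ ℓ (oneHot K k) z := by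
    intro k z hz
    have := hproper (oneHot K k) (oneHot_mem k) z hz
    rwa [extLoss_oneHot, extLoss_oneHot] at this
  -- towers: μ[Q k ∘ X | mZ] =ᵐ μ[C k | mZ]
  have htower : ∀ k, μ[fun ω => Q (X ω) k|mZ] =ᵐ[μ] μ[fun ω => C ω k|mZ] := by
    intro k
    have e1 : μ[fun ω => Q (X ω) k|mZ] =ᵐ[μ] μ[μ[fun ω => Y ω k|MeasurableSpace.comap X inferInstance]|mZ] :=
      (condExp_congr_ae (hcond k)).symm
    have e2 : μ[μ[fun ω => Y ω k|MeasurableSpace.comap X inferInstance]|mZ] =ᵐ[μ] μ[fun ω => Y ω k|mZ] :=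
      condExp_condExp_of_le hmZX hmXle
    have e3 : μ[fun ω => C ω k|mZ] =ᵐ[μ] μ[fun ω => Y ω k|mZ] := by
      rw [hC k]
      exact condExp_condExp_of_le le_rfl hmZle
    exact (e1.trans e2).trans e3.symm
  -- Key integrability: each term of the sums is integrable
  have hterm : ∀ (g : Ω → Fin K → ℝ), Measurable[mZ] g →
      (∀ᵐ ω ∂μ, g ω ∈ stdSimplex ℝ (Fin K)) →
      ∀ (w : Ω → Fin K → ℝ), (∀ k, AEStronglyMeasurable[ambMS μ] (fun ω => w ω k) μ) →
      (∀ᵐ ω ∂μ, ∀ k, 0 ≤ w ω k ∧ w ω k ≤ 1) →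
      Integrable (fun ω => extLoss ℓ (w ω) (g ω)) μ →
      ∀ k, Integrable (fun ω => w ω k * ℓ (oneHot K k) (g ω)) μ := by
    intro g hgm hgΔ w hwm hw01 hIw k
    have hgmeas := hgm.mono hmZle le_rfl
    have hℓg : ∀ j, AEStronglyMeasurable[ambMS μ] (fun ω => ℓ (oneHot K j) (g ω)) μ := by
      intro j
      exact ((hℓmeas j).comp hgmeas).aestronglyMeasurable
    have hwc : ∀ j, Integrable (fun ω => w ω j * c j) μ := by
      intro j
      refine ⟨(hwm j).mul aestronglyMeasurable_const, ?_⟩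
      refine HasFiniteIntegral.of_bounded (C := |c j|) ?_
      filter_upwards [hw01] with ω hω
      rw [Real.norm_eq_abs, abs_mul]
      have h1 : |w ω j| ≤ 1 := abs_le.mpr ⟨by linarith [(hω j).1], (hω j).2⟩
      nlinarith [abs_nonneg (c j)]
    have hS : Integrable (fun ω => ∑ j, w ω j * (ℓ (oneHot K j) (g ω) - c j)) μ := by
      have : (fun ω => ∑ j, w ω j * (ℓ (oneHot K j) (g ω) - c j))
          = fun ω => extLoss ℓ (w ω) (g ω) - ∑ j, w ω j * c j := by
        funext ω
        simp only [extLoss, mul_sub, Finset.sum_sub_distrib]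
      rw [this]
      exact hIw.sub (integrable_finset_sum _ fun j _ => hwc j)
    have hnn : ∀ᵐ ω ∂μ, ∀ j, 0 ≤ w ω j * (ℓ (oneHot K j) (g ω) - c j) := by
      filter_upwards [hw01, hgΔ] with ω hω hg
      intro j
      exact mul_nonneg (hω j).1 (by linarith [hlb j (g ω) hg])
    have hIk : Integrable (fun ω => w ω k * (ℓ (oneHot K k) (g ω) - c k)) μ := by
      refine hS.mono' ((hwm k).mul ((hℓg k).sub aestronglyMeasurable_const)) ?_
      filter_upwards [hnn] with ω hω
      rw [Real.norm_eq_abs, abs_of_nonneg (hω k)]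
      exact Finset.single_le_sum (fun j _ => hω j) (Finset.mem_univ k)
    have : (fun ω => w ω k * ℓ (oneHot K k) (g ω))
        = fun ω => w ω k * (ℓ (oneHot K k) (g ω) - c k) + w ω k * c k := by
      funext ω; ring
    rw [this]
    exact hIk.add (hwc k)
  -- the key lemma: for an mZ-measurable simplex-valued g,
  -- ∫ extLoss ℓ (Q ∘ X) g = ∫ extLoss ℓ C g
  have hQw : ∀ᵐ ω ∂μ, ∀ k, 0 ≤ Q (X ω) k ∧ Q (X ω) k ≤ 1 :=
    ae_of_all μ fun ω k => hQ01 (X ω) k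
  have key : ∀ (g : Ω → Fin K → ℝ), Measurable[mZ] g →
      (∀ᵐ ω ∂μ, g ω ∈ stdSimplex ℝ (Fin K)) →
      Integrable (fun ω => extLoss ℓ (Q (X ω)) (g ω)) μ →
      Integrable (fun ω => extLoss ℓ (C ω) (g ω)) μ →
      ∫ ω, extLoss ℓ (Q (X ω)) (g ω) ∂μ = ∫ ω, extLoss ℓ (C ω) (g ω) ∂μ := by
    intro g hgm hgΔ hI1 hI2
    have hgmeas := hgm.mono hmZle le_rfl
    have htQ : ∀ k, Integrable (fun ω => Q (X ω) k * ℓ (oneHot K k) (g ω)) μ :=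
      hterm g hgm hgΔ _ (fun k => (hQkint k).1) hQw hI1
    have htC : ∀ k, Integrable (fun ω => C ω k * ℓ (oneHot K k) (g ω)) μ :=
      hterm g hgm hgΔ _ (fun k => (hCkint k).1) hC01ae hI2
    have hsplit1 : ∫ ω, extLoss ℓ (Q (X ω)) (g ω) ∂μ
        = ∑ k, ∫ ω, Q (X ω) k * ℓ (oneHot K k) (g ω) ∂μ := by
      rw [← integral_finset_sum _ fun k _ => htQ k]; rfl
    have hsplit2 : ∫ ω, extLoss ℓ (C ω) (g ω) ∂μ
        = ∑ k, ∫ ω, C ω k * ℓ (oneHot K k) (g ω) ∂μ := by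
      rw [← integral_finset_sum _ fun k _ => htC k]; rfl
    rw [hsplit1, hsplit2]
    refine Finset.sum_congr rfl fun k _ => ?_
    -- per-coordinate orthogonality
    set h : Ω → ℝ := fun ω => ℓ (oneHot K k) (g ω) with hh
    have hsm : StronglyMeasurable[mZ] h :=
      (Measurable.stronglyMeasurable ((hℓmeas k).comp hgm))
    have hprod1 : Integrable (h * fun ω => Q (X ω) k) μ := by
      have : (h * fun ω => Q (X ω) k) = fun ω => Q (X ω) k * ℓ (oneHot K k) (g ω) := by
        funext ω; simp [hh, mul_comm]
      rw [this]; exact htQ k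
    have hprod2 : Integrable (h * fun ω => C ω k) μ := by
      have : (h * fun ω => C ω k) = fun ω => C ω k * ℓ (oneHot K k) (g ω) := by
        funext ω; simp [hh, mul_comm]
      rw [this]; exact htC k
    have e1 : μ[h * fun ω => Q (X ω) k|mZ] =ᵐ[μ] h * μ[fun ω => Q (X ω) k|mZ] :=
      condExp_mul_of_stronglyMeasurable_left hsm hprod1 (hQkint k)
    have e2 : μ[h * fun ω => C ω k|mZ] =ᵐ[μ] h * μ[fun ω => C ω k|mZ] :=
      condExp_mul_of_stronglyMeasurable_left hsm hprod2 (hCkint k)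
    have emid : (h * μ[fun ω => Q (X ω) k|mZ]) =ᵐ[μ] (h * μ[fun ω => C ω k|mZ]) := by
      filter_upwards [htower k] with ω hω
      simp only [Pi.mul_apply, hω]
    calc ∫ ω, Q (X ω) k * ℓ (oneHot K k) (g ω) ∂μ
        = ∫ ω, (h * fun ω => Q (X ω) k) ω ∂μ := by
          refine integral_congr_ae (ae_of_all μ fun ω => ?_)
          simp [hh, mul_comm]
      _ = ∫ ω, (μ[h * fun ω => Q (X ω) k|mZ]) ω ∂μ := (integral_condExp hmZle).symm
      _ = ∫ ω, (h * μ[fun ω => C ω k|mZ]) ω ∂μ :=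
          integral_congr_ae (e1.trans emid)
      _ = ∫ ω, (μ[h * fun ω => C ω k|mZ]) ω ∂μ := (integral_congr_ae e2).symm
      _ = ∫ ω, (h * fun ω => C ω k) ω ∂μ := integral_condExp hmZle
      _ = ∫ ω, C ω k * ℓ (oneHot K k) (g ω) ∂μ := by
          refine integral_congr_ae (ae_of_all μ fun ω => ?_)
          simp [hh, mul_comm]
  -- apply the key lemma with g = Z and g = C
  have hZΔ : ∀ᵐ ω ∂μ, Z ω ∈ stdSimplex ℝ (Fin K) :=
    ae_of_all μ fun ω => by rw [hZ]; exact hfΔ (X ω)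
  have keyZ := key Z hZmZ hZΔ hint1 hint3
  have keyC := key C hCmZ hCΔ hint4 hint5
  -- unfold lossDiv and conclude
  have hd1 : ∫ ω, lossDiv ℓ (Q (X ω)) (Z ω) ∂μ
      = ∫ ω, extLoss ℓ (Q (X ω)) (Z ω) ∂μ - ∫ ω, extLoss ℓ (Q (X ω)) (Q (X ω)) ∂μ := by
    simp only [lossDiv]; exact integral_sub hint1 hint2
  have hd2 : ∫ ω, lossDiv ℓ (C ω) (Z ω) ∂μ
      = ∫ ω, extLoss ℓ (C ω) (Z ω) ∂μ - ∫ ω, extLoss ℓ (C ω) (C ω) ∂μ := by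
    simp only [lossDiv]; exact integral_sub hint3 hint5
  have hd3 : ∫ ω, lossDiv ℓ (Q (X ω)) (C ω) ∂μ
      = ∫ ω, extLoss ℓ (Q (X ω)) (C ω) ∂μ - ∫ ω, extLoss ℓ (Q (X ω)) (Q (X ω)) ∂μ := by
    simp only [lossDiv]; exact integral_sub hint4 hint2
  refine ⟨by rw [hd1, hd2, hd3]; linarith, ?_, ?_⟩
  · refine integral_nonneg_of_ae ?_
    filter_upwards [hCΔ, hZΔ] with ω h1 h2
    have := hproper (C ω) h1 (Z ω) h2
    simp only [lossDiv, Pi.zero_apply]; linarith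
  · refine integral_nonneg_of_ae ?_
    filter_upwards [hCΔ] with ω h1
    have := hproper (Q (X ω)) (hQΔ (X ω)) (C ω) h1
    simp only [lossDiv, Pi.zero_apply]; linarith
end

section
/- For i = 1,…,N let X_i be i.i.d. draws of the input X, and given X_i let Y_i^{(1)},…,Y_i^{(n_i)} be conditionally i.i.d. labels in e^K drawn from the conditional law P(Y | X = X_i), with fixed integers n_i ≥ 1. Put y_{ik} = Σ_{j=1}^{n_i} Y_{ik}^{(j)}, μ̂_{ik} = y_{ik}/n_i and z_i = f(X_i) for a measurable f into Δ^{K−1}. Then for any fixed weights w_i ≥ 0 with W = Σ_i w_i > 0, the estimator ĤL = (1/W) Σ_{i=1}^N w_i Σ_{k=1}^K [ (μ̂_{ik} − z_{ik})² + μ̂_{ik}(1 − μ̂_{ik}) ] is an unbiased estimator of the expected squared loss L_PS = E[ ‖Y − f(X)‖² ], where (X,Y) follows the joint distribution of an input and a single label: E[ĤL] = L_PS. -/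
open MeasureTheory ProbabilityTheory
open scoped ProbabilityTheory

lemma oneHot_apply_cases (K : ℕ) (k' k : Fin K) :
    oneHot K k' k = 0 ∨ oneHot K k' k = 1 := by
  classical
  unfold oneHot
  rcases eq_or_ne k k' with h | h
  · right; subst h; simp
  · left; simp [Pi.single_apply, h]

/-- Evaluation at a coordinate is measure preserving for products of probability measures. -/
lemma my_measurePreserving_eval {ι : Type*} [Fintype ι] {α : ι → Type*}
    [∀ i, MeasurableSpace (α i)] (μ : ∀ i, Measure (α i)) [∀ i, IsProbabilityMeasure (μ i)]
    (i : ι) : MeasurePreserving (Function.eval i) (Measure.pi μ) (μ i) := by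
  classical
  refine ⟨measurable_pi_apply i, ?_⟩
  ext s hs
  rw [Measure.map_apply (measurable_pi_apply i) hs, Set.eval_preimage, Measure.pi_pi]
  rw [Fintype.prod_eq_single i (fun j hj => by simp [Function.update_of_ne hj])]
  simp

lemma my_integral_eval {ι : Type*} [Fintype ι] {α : ι → Type*}
    [∀ i, MeasurableSpace (α i)] (μ : ∀ i, Measure (α i)) [∀ i, IsProbabilityMeasure (μ i)]
    (i : ι) {g : α i → ℝ} (hg : AEStronglyMeasurable g (μ i)) :
    ∫ Y, g (Y i) ∂Measure.pi μ = ∫ y, g y ∂μ i := by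
  rw [← (my_measurePreserving_eval μ i).map_eq] at hg ⊢
  exact (integral_map (measurable_pi_apply i).aemeasurable hg).symm

/-- unbiased estimator of the expected squared loss from label histograms:
inputs `X_i` are i.i.d. with law `ν`; given `X_i = x` the `n i` labels of instance `i` are
conditionally i.i.d. with law `κ x` (the conditional label law, one-hot valued); with
`μ̂_{ik} = y_{ik}/n_i` and `z_i = f(X_i)`, the weighted estimator
`(1/W) ∑ᵢ wᵢ ∑ₖ [(μ̂_{ik} - z_{ik})² + μ̂_{ik}(1 - μ̂_{ik})]`
has expectation `L_PS = E[‖Y - f(X)‖²]` for a generic input-label pair `(X, Y) ∼ ν ⊗ₘ κ`. -/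
theorem stmt4
    {𝒳 : Type*} [MeasurableSpace 𝒳]
    (K N : ℕ)
    -- law of the input `X` and conditional law `κ` of a single label given the input
    (ν : Measure 𝒳) [IsProbabilityMeasure ν]
    (κ : Kernel 𝒳 (Fin K → ℝ)) [IsMarkovKernel κ]
    (hκoh : ∀ x, ∀ᵐ y ∂(κ x), ∃ k, y = oneHot K k)
    -- numbers of annotators
    (n : Fin N → ℕ) (hn : ∀ i, 1 ≤ n i)
    -- conditionally i.i.d. labels: kernel of `m` labels is the `m`-fold product of `κ`
    (κpi : (m : ℕ) → Kernel 𝒳 (Fin m → Fin K → ℝ))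
    [∀ m, IsMarkovKernel (κpi m)]
    (hκpi : ∀ m x, κpi m x = Measure.pi fun _ : Fin m => κ x)
    -- the classifier `f`, measurable into the simplex
    (f : 𝒳 → Fin K → ℝ) (hf : Measurable f)
    (hfΔ : ∀ x, f x ∈ stdSimplex ℝ (Fin K))
    -- fixed nonnegative weights with positive total weight
    (w : Fin N → ℝ) (hw : ∀ i, 0 ≤ w i) (hW : 0 < ∑ i, w i) :
    -- instances are independent: the sample follows the product of the per-instance laws
    ∫ ω : (i : Fin N) → 𝒳 × (Fin (n i) → Fin K → ℝ),
        (∑ i, w i * ∑ k,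
          (((∑ j, (ω i).2 j k) / (n i) - f (ω i).1 k) ^ 2
            + ((∑ j, (ω i).2 j k) / (n i)) * (1 - (∑ j, (ω i).2 j k) / (n i))))
          / (∑ i, w i)
      ∂(Measure.pi fun i => ν ⊗ₘ κpi (n i))
    = ∫ p : 𝒳 × (Fin K → ℝ), ∑ k, (p.2 k - f p.1 k) ^ 2 ∂(ν ⊗ₘ κ) := by
  classical
  -- basic facts
  set A : Set (Fin K → ℝ) := Set.range (oneHot K) with hAdef
  have hA : MeasurableSet A := (Set.finite_range _).measurableSet
  have hκA : ∀ x, ∀ᵐ y ∂(κ x), y ∈ A := fun x =>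
    (hκoh x).mono fun y ⟨k, hk⟩ => ⟨k, hk.symm⟩
  have hyA : ∀ y ∈ A, ∀ k, 0 ≤ y k ∧ y k ≤ 1 ∧ y k ^ 2 = y k := by
    rintro y ⟨k', rfl⟩ k
    rcases oneHot_apply_cases K k' k with h | h <;> rw [h] <;> norm_num
  have hz01 : ∀ x k, 0 ≤ f x k ∧ f x k ≤ 1 := by
    intro x k
    obtain ⟨h0, h1⟩ := hfΔ x
    exact ⟨h0 k, h1 ▸ Finset.single_le_sum (fun k _ => h0 k) (Finset.mem_univ k)⟩
  -- integrability of a single coordinate of a single label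
  have intY : ∀ x k, Integrable (fun y : Fin K → ℝ => y k) (κ x) := by
    intro x k
    refine Integrable.mono' (integrable_const 1) (measurable_pi_apply k).aestronglyMeasurable ?_
    filter_upwards [hκA x] with y hy
    obtain ⟨h0, h1, _⟩ := hyA y hy k
    rw [Real.norm_eq_abs, abs_of_nonneg h0]; exact h1
  -- the conditional mean and the common value of both sides
  set p : 𝒳 → Fin K → ℝ := fun x k => ∫ y, y k ∂(κ x) with hp
  set Φ : 𝒳 → ℝ := fun x => ∑ k, ((f x k) ^ 2 + (1 - 2 * f x k) * p x k) with hΦ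
  -- the per-instance simplified estimator
  set G : (m : ℕ) → 𝒳 × (Fin m → Fin K → ℝ) → ℝ := fun m q =>
    ∑ k, ((f q.1 k) ^ 2 + (1 - 2 * f q.1 k) * ((∑ j, q.2 j k) / (m : ℝ))) with hG
  have hGmeas : ∀ m : ℕ, Measurable (G m) := by
    intro m
    apply Finset.measurable_sum
    intro k _
    have h1 : Measurable fun q : 𝒳 × (Fin m → Fin K → ℝ) => f q.1 k :=
      (measurable_pi_apply k).comp (hf.comp measurable_fst)
    have h2 : Measurable fun q : 𝒳 × (Fin m → Fin K → ℝ) => (∑ j, q.2 j k) :=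
      Finset.measurable_sum _ fun j _ =>
        (measurable_pi_apply k).comp ((measurable_pi_apply j).comp measurable_snd)
    exact (h1.pow_const 2).add ((measurable_const.sub (h1.const_mul 2)).mul (h2.div_const m))
  -- labels are a.e. one-hot under the per-instance law
  have hE : ∀ m : ℕ, ∀ᵐ q ∂(ν ⊗ₘ κpi m), ∀ j, q.2 j ∈ A := by
    intro m
    apply Measure.ae_compProd_of_ae_ae
    · have : {q : 𝒳 × (Fin m → Fin K → ℝ) | ∀ j, q.2 j ∈ A}
          = ⋂ j, (fun q : 𝒳 × (Fin m → Fin K → ℝ) => q.2 j) ⁻¹' A := by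
        ext q; simp
      rw [this]
      exact MeasurableSet.iInter fun j =>
        hA.preimage ((measurable_pi_apply j).comp measurable_snd)
    · refine Filter.Eventually.of_forall fun x => ?_
      rw [hκpi]
      exact Filter.eventually_all.2 fun j =>
        (MeasureTheory.Measure.tendsto_eval_ae_ae).eventually (hκA x)
  -- the empirical mean lies in [0,1]
  have hsm : ∀ (m : ℕ) (q : 𝒳 × (Fin m → Fin K → ℝ)), (∀ j, q.2 j ∈ A) → ∀ k,
      0 ≤ (∑ j, q.2 j k) / (m : ℝ) ∧ (∑ j, q.2 j k) / (m : ℝ) ≤ 1 := by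
    intro m q hq k
    have h0 : 0 ≤ ∑ j, q.2 j k := Finset.sum_nonneg fun j _ => (hyA _ (hq j) k).1
    have h1 : ∑ j, q.2 j k ≤ (m : ℝ) := by
      calc ∑ j, q.2 j k ≤ ∑ _j : Fin m, (1 : ℝ) :=
            Finset.sum_le_sum fun j _ => (hyA _ (hq j) k).2.1
        _ = (m : ℝ) := by simp
    rcases Nat.eq_zero_or_pos m with hm | hm
    · subst hm
      simp
    · have hm' : (0 : ℝ) < m := by exact_mod_cast hm
      exact ⟨div_nonneg h0 hm'.le, (div_le_one hm').2 h1⟩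
  -- integrability of the per-instance estimator
  have hGint : ∀ m : ℕ, Integrable (G m) (ν ⊗ₘ κpi m) := by
    intro m
    refine Integrable.mono' (integrable_const ((2:ℝ) * K)) (hGmeas m).aestronglyMeasurable ?_
    filter_upwards [hE m] with q hq
    rw [Real.norm_eq_abs, hG]
    calc |∑ k, ((f q.1 k) ^ 2 + (1 - 2 * f q.1 k) * ((∑ j, q.2 j k) / (m : ℝ)))|
        ≤ ∑ k, |(f q.1 k) ^ 2 + (1 - 2 * f q.1 k) * ((∑ j, q.2 j k) / (m : ℝ))| :=
          Finset.abs_sum_le_sum_abs _ _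
      _ ≤ ∑ _k : Fin K, (2 : ℝ) := by
          refine Finset.sum_le_sum fun k _ => ?_
          obtain ⟨ht0, ht1⟩ := hsm m q hq k
          obtain ⟨hz0, hz1⟩ := hz01 q.1 k
          rw [abs_le]
          constructor <;> nlinarith
      _ = 2 * K := by simp [mul_comm]
  -- inner integral computation for the estimator
  have hinner : ∀ (m : ℕ), 1 ≤ m → ∀ x, ∫ Y, G m (x, Y) ∂(κpi m x) = Φ x := by
    intro m hm x
    rw [hκpi]
    have intcoord : ∀ (k : Fin K) (j : Fin m),
        Integrable (fun Y : Fin m → Fin K → ℝ => Y j k) (Measure.pi fun _ => κ x) :=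
      fun k j => ((my_measurePreserving_eval (fun _ : Fin m => κ x) j).integrable_comp
        (measurable_pi_apply k).aestronglyMeasurable).mpr (intY x k)
    have intsum : ∀ k : Fin K, Integrable (fun Y : Fin m → Fin K → ℝ =>
        (∑ j, Y j k) / (m : ℝ)) (Measure.pi fun _ => κ x) :=
      fun k => (integrable_finset_sum _ fun j _ => intcoord k j).div_const m
    have intterm : ∀ k : Fin K, Integrable (fun Y : Fin m → Fin K → ℝ =>
        (f x k) ^ 2 + (1 - 2 * f x k) * ((∑ j, Y j k) / (m : ℝ)))
        (Measure.pi fun _ => κ x) :=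
      fun k => (integrable_const _).add ((intsum k).const_mul _)
    rw [hG, hΦ]
    simp only []
    rw [integral_finset_sum _ fun k _ => intterm k]
    refine Finset.sum_congr rfl fun k _ => ?_
    rw [integral_add (integrable_const _) ((intsum k).const_mul _), integral_const,
      integral_const_mul, integral_div, integral_finset_sum _ fun j _ => intcoord k j]
    have hev : ∀ j : Fin m, (∫ Y, Y j k ∂(Measure.pi fun _ : Fin m => κ x)) = p x k :=
      fun j => my_integral_eval (fun _ : Fin m => κ x) j
        (measurable_pi_apply k).aestronglyMeasurable
    rw [Finset.sum_congr rfl fun j _ => hev j, Finset.sum_const, Finset.card_univ,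
      Fintype.card_fin, nsmul_eq_mul]
    have hm' : (m : ℝ) ≠ 0 := Nat.cast_ne_zero.mpr (by omega)
    rw [mul_div_cancel_left₀ _ hm']
    simp [measure_univ]
  -- per-instance expected value
  have hI : ∀ i : Fin N, ∫ q, G (n i) q ∂(ν ⊗ₘ κpi (n i)) = ∫ x, Φ x ∂ν := by
    intro i
    rw [Measure.integral_compProd (hGint (n i))]
    exact integral_congr_ae (Filter.Eventually.of_forall fun x => hinner (n i) (hn i) x)
  -- the right-hand side
  have hHmeas : Measurable (fun q : 𝒳 × (Fin K → ℝ) => ∑ k, (q.2 k - f q.1 k) ^ 2) :=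
    Finset.measurable_sum _ fun k _ =>
      (((measurable_pi_apply k).comp measurable_snd).sub
        ((measurable_pi_apply k).comp (hf.comp measurable_fst))).pow_const 2
  have hEκ : ∀ᵐ q ∂(ν ⊗ₘ κ), q.2 ∈ A :=
    Measure.ae_compProd_of_ae_ae (hA.preimage measurable_snd)
      (Filter.Eventually.of_forall fun x => hκA x)
  have hHint : Integrable (fun q : 𝒳 × (Fin K → ℝ) => ∑ k, (q.2 k - f q.1 k) ^ 2) (ν ⊗ₘ κ) := by
    refine Integrable.mono' (integrable_const ((2:ℝ) * K)) hHmeas.aestronglyMeasurable ?_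
    filter_upwards [hEκ] with q hq
    rw [Real.norm_eq_abs]
    calc |∑ k, (q.2 k - f q.1 k) ^ 2| ≤ ∑ k, |(q.2 k - f q.1 k) ^ 2| :=
          Finset.abs_sum_le_sum_abs _ _
      _ ≤ ∑ _k : Fin K, (2 : ℝ) := by
          refine Finset.sum_le_sum fun k _ => ?_
          obtain ⟨hy0, hy1, _⟩ := hyA _ hq k
          obtain ⟨hz0, hz1⟩ := hz01 q.1 k
          rw [abs_le]
          constructor <;> nlinarith
      _ = 2 * K := by simp [mul_comm]
  have hRHS : ∫ q : 𝒳 × (Fin K → ℝ), ∑ k, (q.2 k - f q.1 k) ^ 2 ∂(ν ⊗ₘ κ)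
      = ∫ x, Φ x ∂ν := by
    rw [Measure.integral_compProd hHint]
    refine integral_congr_ae (Filter.Eventually.of_forall fun x => ?_)
    simp only []
    have h_ae : (fun y : Fin K → ℝ => ∑ k, (y k - f x k) ^ 2) =ᵐ[κ x]
        (fun y => ∑ k, ((f x k) ^ 2 + (1 - 2 * f x k) * y k)) := by
      filter_upwards [hκA x] with y hy
      refine Finset.sum_congr rfl fun k _ => ?_
      have h2 := (hyA y hy k).2.2
      linear_combination h2
    have intk : ∀ k : Fin K, Integrable
        (fun y : Fin K → ℝ => (f x k) ^ 2 + (1 - 2 * f x k) * y k) (κ x) :=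
      fun k => (integrable_const _).add ((intY x k).const_mul _)
    rw [integral_congr_ae h_ae, integral_finset_sum _ fun k _ => intk k]
    rw [hΦ]
    refine Finset.sum_congr rfl fun k _ => ?_
    rw [integral_add (integrable_const _) ((intY x k).const_mul _), integral_const,
      integral_const_mul]
    simp [measure_univ, hp]
  -- the left-hand side
  have halg : ∀ a z : ℝ, (a - z) ^ 2 + a * (1 - a) = z ^ 2 + (1 - 2 * z) * a :=
    fun a z => by ring
  simp_rw [halg]
  rw [integral_div]
  have hint_i : ∀ i : Fin N, Integrable
      (fun ω : (i : Fin N) → 𝒳 × (Fin (n i) → Fin K → ℝ) => w i * G (n i) (ω i))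
      (Measure.pi fun i => ν ⊗ₘ κpi (n i)) := fun i =>
    (((my_measurePreserving_eval (fun i => ν ⊗ₘ κpi (n i)) i).integrable_comp
      (hGmeas (n i)).aestronglyMeasurable).mpr (hGint (n i))).const_mul _
  rw [integral_finset_sum _ fun i _ => hint_i i]
  have heach : ∀ i : Fin N,
      (∫ ω : (i : Fin N) → 𝒳 × (Fin (n i) → Fin K → ℝ), w i * G (n i) (ω i)
        ∂(Measure.pi fun i => ν ⊗ₘ κpi (n i))) = w i * ∫ x, Φ x ∂ν := by
    intro i
    rw [integral_const_mul]
    congr 1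
    rw [my_integral_eval (fun i => ν ⊗ₘ κpi (n i)) i (hGmeas (n i)).aestronglyMeasurable]
    exact hI i
  rw [Finset.sum_congr rfl fun i _ => heach i, ← Finset.sum_mul, mul_comm, mul_div_assoc,
    div_self hW.ne', mul_one]
  exact hRHS.symm
end

section
/- For i = 1,…,N let X_i be i.i.d. draws of the input X, and given X_i let Y_i^{(1)},…,Y_i^{(n_i)} be conditionally i.i.d. labels with law Cat(Q(X_i)) for a measurable Q into Δ^{K−1}, with fixed integers n_i ≥ 2. Put μ̂_{ik} = (1/n_i) Σ_j Y_{ik}^{(j)} and z_i = f(X_i). Then Ĥ EL := (1/N) Σ_{i=1}^N Σ_{k=1}^K [ (μ̂_{ik} − z_{ik})² − (1/(n_i − 1)) μ̂_{ik}(1 − μ̂_{ik}) ] is an unbiased estimator of the epistemic loss EL = E[ ‖Q(X) − f(X)‖² ]: E[Ĥ EL] = EL. -/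
open MeasureTheory ProbabilityTheory
open scoped ProbabilityTheory

/-- The categorical distribution `Cat(q)` on one-hot vectors, with weights `q`. -/
noncomputable def catMeasure {K : ℕ} (q : Fin K → ℝ) : Measure (Fin K → ℝ) :=
  ∑ k, ENNReal.ofReal (q k) • Measure.dirac (oneHot K k)

instance catMeasure_finite {K : ℕ} (q : Fin K → ℝ) : IsFiniteMeasure (catMeasure q) := by
  constructor
  simp only [catMeasure, Measure.finset_sum_apply, Measure.smul_apply, smul_eq_mul,
    measure_univ, mul_one]
  exact ENNReal.sum_lt_top.2 fun k _ => ENNReal.ofReal_lt_top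

lemma integrable_dirac'' {α : Type*} [MeasurableSpace α] [MeasurableSingletonClass α]
    (g : α → ℝ) (a : α) : Integrable g (Measure.dirac a) := by
  refine (integrable_const (g a)).congr ?_
  rw [MeasureTheory.ae_dirac_eq]
  exact Filter.eventually_pure.2 rfl

lemma pi_cat_eq {K m : ℕ} (q : Fin K → ℝ) :
    (Measure.pi fun _ : Fin m => catMeasure q)
      = ∑ c : Fin m → Fin K,
          (∏ j, ENNReal.ofReal (q (c j))) • Measure.dirac (fun j => oneHot K (c j)) := by
  refine Measure.pi_eq fun s hs => ?_
  simp only [Measure.finset_sum_apply, Measure.smul_apply, smul_eq_mul]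
  have hd : ∀ (c : Fin m → Fin K),
      Measure.dirac (fun j => oneHot K (c j)) (Set.pi Set.univ s)
        = ∏ j, Measure.dirac (oneHot K (c j)) (s j) := by
    intro c
    rw [Measure.dirac_apply' _ (MeasurableSet.univ_pi hs),
      Finset.prod_congr rfl fun j _ => Measure.dirac_apply' _ (hs j)]
    classical
    simp only [Set.indicator_apply, Pi.one_apply]
    rw [Finset.prod_boole]
    congr 1
    · simp [Set.mem_univ_pi]
  simp_rw [hd]
  have hc : ∀ j, catMeasure q (s j) = ∑ k, ENNReal.ofReal (q k) * Measure.dirac (oneHot K k) (s j) := by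
    intro j
    simp [catMeasure, Measure.finset_sum_apply]
  rw [Finset.prod_congr rfl fun j _ => hc j, Fintype.prod_sum]
  exact Finset.sum_congr rfl fun c _ => (Finset.prod_mul_distrib).symm

lemma integral_pi_cat {K m : ℕ} (q : Fin K → ℝ) (hq : ∀ k, 0 ≤ q k)
    (g : (Fin m → Fin K → ℝ) → ℝ) :
    ∫ y, g y ∂(Measure.pi fun _ : Fin m => catMeasure q)
      = ∑ c : Fin m → Fin K, (∏ j, q (c j)) * g (fun j => oneHot K (c j)) := by
  rw [pi_cat_eq]
  rw [integral_finset_sum_measure (fun c _ =>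
    (integrable_dirac'' g _).smul_measure (ENNReal.prod_lt_top (fun j _ => ENNReal.ofReal_lt_top)).ne)]
  refine Finset.sum_congr rfl fun c _ => ?_
  rw [integral_smul_measure, integral_dirac]
  rw [ENNReal.toReal_prod]
  simp only [ENNReal.toReal_ofReal (hq _), smul_eq_mul]

lemma sum_fun_succ {M : Type*} [AddCommMonoid M] {m K : ℕ}
    (F : (Fin (m + 1) → Fin K) → M) :
    ∑ c : Fin (m + 1) → Fin K, F c
      = ∑ x : Fin K, ∑ c : Fin m → Fin K, F (Fin.cons x c) := by
  rw [← (Fin.consEquiv fun _ : Fin (m + 1) => Fin K).sum_comp F, Fintype.sum_prod_type]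
  rfl

lemma moment0 {K m : ℕ} (q : Fin K → ℝ) (hq1 : ∑ k, q k = 1) :
    ∑ c : Fin m → Fin K, (∏ j, q (c j)) = 1 := by
  induction m with
  | zero => simp
  | succ m ih =>
    rw [sum_fun_succ]
    simp only [Fin.prod_univ_succ, Fin.cons_zero, Fin.cons_succ]
    simp only [← Finset.mul_sum, ih, mul_one]
    exact hq1

lemma moment1 {K m : ℕ} (q : Fin K → ℝ) (hq1 : ∑ k, q k = 1) (k : Fin K) :
    ∑ c : Fin m → Fin K, (∏ j, q (c j)) * (∑ j, if k = c j then (1:ℝ) else 0)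
      = m * q k := by
  induction m with
  | zero => simp
  | succ m ih =>
    rw [sum_fun_succ]
    simp only [Fin.prod_univ_succ, Fin.cons_zero, Fin.cons_succ, Fin.sum_univ_succ]
    have : ∀ x : Fin K, ∑ c : Fin m → Fin K,
        (q x * ∏ j, q (c j)) * ((if k = x then (1:ℝ) else 0) + ∑ j, if k = c j then (1:ℝ) else 0)
        = q x * (if k = x then (1:ℝ) else 0) + q x * ((m : ℝ) * q k) := by
      intro x
      have expand : ∀ c : Fin m → Fin K,
          (q x * ∏ j, q (c j)) * ((if k = x then (1:ℝ) else 0) + ∑ j, if k = c j then (1:ℝ) else 0)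
          = q x * (if k = x then (1:ℝ) else 0) * (∏ j, q (c j))
            + q x * ((∏ j, q (c j)) * (∑ j, if k = c j then (1:ℝ) else 0)) := by
        intro c; ring
      rw [Finset.sum_congr rfl fun c _ => expand c, Finset.sum_add_distrib,
        ← Finset.mul_sum, ← Finset.mul_sum, moment0 q hq1, ih, mul_one]
    rw [Finset.sum_congr rfl fun x _ => this x, Finset.sum_add_distrib]
    simp only [mul_ite, mul_one, mul_zero, Finset.sum_ite_eq, Finset.mem_univ, if_true]
    rw [← Finset.sum_mul, hq1]
    push_cast
    ring

lemma moment2 {K m : ℕ} (q : Fin K → ℝ) (hq1 : ∑ k, q k = 1) (k : Fin K) :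
    ∑ c : Fin m → Fin K, (∏ j, q (c j)) * (∑ j, if k = c j then (1:ℝ) else 0) ^ 2
      = m * q k + ((m : ℝ) * (m - 1)) * q k ^ 2 := by
  induction m with
  | zero => simp
  | succ m ih =>
    rw [sum_fun_succ]
    simp only [Fin.prod_univ_succ, Fin.cons_zero, Fin.cons_succ, Fin.sum_univ_succ]
    have : ∀ x : Fin K, ∑ c : Fin m → Fin K,
        (q x * ∏ j, q (c j)) * ((if k = x then (1:ℝ) else 0) + ∑ j, if k = c j then (1:ℝ) else 0) ^ 2
        = q x * (if k = x then (1:ℝ) else 0)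
          + 2 * (q x * (if k = x then (1:ℝ) else 0)) * ((m : ℝ) * q k)
          + q x * ((m : ℝ) * q k + ((m : ℝ) * (m - 1)) * q k ^ 2) := by
      intro x
      have hsq : (if k = x then (1:ℝ) else 0) ^ 2 = (if k = x then (1:ℝ) else 0) := by
        by_cases h : k = x <;> simp [h]
      have expand : ∀ c : Fin m → Fin K,
          (q x * ∏ j, q (c j)) * ((if k = x then (1:ℝ) else 0) + ∑ j, if k = c j then (1:ℝ) else 0) ^ 2
          = q x * (if k = x then (1:ℝ) else 0) ^ 2 * (∏ j, q (c j))
            + 2 * (q x * (if k = x then (1:ℝ) else 0))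
                * ((∏ j, q (c j)) * (∑ j, if k = c j then (1:ℝ) else 0))
            + q x * ((∏ j, q (c j)) * (∑ j, if k = c j then (1:ℝ) else 0) ^ 2) := by
        intro c; ring
      rw [Finset.sum_congr rfl fun c _ => expand c, Finset.sum_add_distrib,
        Finset.sum_add_distrib, ← Finset.mul_sum, ← Finset.mul_sum, ← Finset.mul_sum,
        moment0 q hq1, moment1 q hq1, ih, hsq, mul_one]
    rw [Finset.sum_congr rfl fun x _ => this x, Finset.sum_add_distrib, Finset.sum_add_distrib]
    have h1 : ∑ x : Fin K, q x * (if k = x then (1:ℝ) else 0) = q k := by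
      simp [mul_ite, Finset.sum_ite_eq]
    have h2 : ∑ x : Fin K, 2 * (q x * (if k = x then (1:ℝ) else 0)) * ((m : ℝ) * q k)
        = 2 * q k * ((m : ℝ) * q k) := by
      rw [← Finset.sum_mul, ← Finset.mul_sum, h1]
    have h3 : ∑ x : Fin K, q x * ((m : ℝ) * q k + ((m : ℝ) * (m - 1)) * q k ^ 2)
        = (m : ℝ) * q k + ((m : ℝ) * (m - 1)) * q k ^ 2 := by
      rw [← Finset.sum_mul, hq1, one_mul]
    rw [h1, h2, h3]
    push_cast
    ring

lemma core_expectation {K m : ℕ} (hm : 2 ≤ m) (q z : Fin K → ℝ)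
    (hq0 : ∀ k, 0 ≤ q k) (hq1 : ∑ k, q k = 1) :
    ∫ y, (∑ k, (((∑ j, y j k) / m - z k) ^ 2
        - (1 / ((m : ℝ) - 1)) * (((∑ j, y j k) / m) * (1 - (∑ j, y j k) / m))))
      ∂(Measure.pi fun _ : Fin m => catMeasure q)
    = ∑ k, (q k - z k) ^ 2 := by
  have hm2 : (2 : ℝ) ≤ (m : ℝ) := by exact_mod_cast hm
  have hm0 : (m : ℝ) ≠ 0 := by linarith
  have hm1 : (m : ℝ) - 1 ≠ 0 := by linarith
  rw [integral_pi_cat q hq0]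
  have honehot : ∀ (c : Fin m → Fin K) (k : Fin K) (j : Fin m),
      oneHot K (c j) k = if k = c j then (1:ℝ) else 0 := by
    intro c k j; simp [oneHot, Pi.single_apply]
  simp only [honehot]
  simp_rw [Finset.mul_sum]
  rw [Finset.sum_comm]
  refine Finset.sum_congr rfl fun k _ => ?_
  set A : ℝ := 1 / ((m : ℝ) * ((m : ℝ) - 1)) with hA
  set B : ℝ := 2 * z k / (m : ℝ) + 1 / ((m : ℝ) * ((m : ℝ) - 1)) with hB
  have key : ∀ S : ℝ,
      (S / m - z k) ^ 2 - (1 / ((m : ℝ) - 1)) * ((S / m) * (1 - S / m))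
        = A * S ^ 2 - B * S + z k ^ 2 := by
    intro S
    rw [hA, hB]
    field_simp
    ring
  have expand : ∀ c : Fin m → Fin K,
      (∏ j, q (c j)) * (((∑ j, if k = c j then (1:ℝ) else 0) / m - z k) ^ 2
          - (1 / ((m : ℝ) - 1)) * (((∑ j, if k = c j then (1:ℝ) else 0) / m)
              * (1 - (∑ j, if k = c j then (1:ℝ) else 0) / m)))
        = A * ((∏ j, q (c j)) * (∑ j, if k = c j then (1:ℝ) else 0) ^ 2)
          - B * ((∏ j, q (c j)) * (∑ j, if k = c j then (1:ℝ) else 0))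
          + z k ^ 2 * (∏ j, q (c j)) := by
    intro c
    rw [key]
    ring
  rw [Finset.sum_congr rfl fun c _ => expand c]
  rw [Finset.sum_add_distrib, Finset.sum_sub_distrib, ← Finset.mul_sum, ← Finset.mul_sum,
    ← Finset.mul_sum, moment0 q hq1, moment1 q hq1, moment2 q hq1, mul_one, hA, hB]
  field_simp
  ring

lemma pi_map_eval {ι : Type*} [Fintype ι] [DecidableEq ι] {α : ι → Type*}
    [∀ i, MeasurableSpace (α i)] (μ : ∀ i, Measure (α i)) [∀ i, IsProbabilityMeasure (μ i)]
    (i : ι) : (Measure.pi μ).map (Function.eval i) = μ i := by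
  ext s hs
  rw [Measure.map_apply (measurable_pi_apply i) hs, Set.eval_preimage, Measure.pi_pi]
  rw [Fintype.prod_eq_single i fun j hj => by simp [Function.update_of_ne hj]]
  simp

lemma ae_good {K m : ℕ} (q : Fin K → ℝ) :
    ∀ᵐ y ∂(Measure.pi fun _ : Fin m => catMeasure q), ∀ j, ∃ k, y j = oneHot K k := by
  have hG : MeasurableSet {y : Fin m → Fin K → ℝ | ∀ j, ∃ k, y j = oneHot K k} := by
    have : {y : Fin m → Fin K → ℝ | ∀ j, ∃ k, y j = oneHot K k}
        = ⋂ j, ⋃ k, (fun y : Fin m → Fin K → ℝ => y j) ⁻¹' {oneHot K k} := by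
      ext y; simp
    rw [this]
    exact MeasurableSet.iInter fun j => MeasurableSet.iUnion fun k =>
      (measurable_pi_apply j) (measurableSet_singleton _)
  rw [ae_iff, pi_cat_eq]
  simp only [Measure.finset_sum_apply, Measure.smul_apply, smul_eq_mul]
  refine Finset.sum_eq_zero fun c _ => ?_
  have h0 : Measure.dirac (fun j => oneHot K (c j))
      {y : Fin m → Fin K → ℝ | ¬ ∀ j, ∃ k, y j = oneHot K k} = 0 := by
    have hset : {y : Fin m → Fin K → ℝ | ¬ ∀ j, ∃ k, y j = oneHot K k}
        = {y : Fin m → Fin K → ℝ | ∀ j, ∃ k, y j = oneHot K k}ᶜ := rfl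
    rw [hset, Measure.dirac_apply' _ hG.compl]
    have hmem : ∀ j, ∃ k, (fun j' => oneHot K (c j')) j = oneHot K k := fun j => ⟨c j, rfl⟩
    simp [Set.indicator_apply, hmem]
  rw [h0, mul_zero]

lemma bound_pointwise {K m : ℕ} (hm : 2 ≤ m) (z : Fin K → ℝ)
    (hz0 : ∀ k, 0 ≤ z k) (hz1 : ∑ k, z k = 1)
    (y : Fin m → Fin K → ℝ) (hy : ∀ j, ∃ k, y j = oneHot K k) :
    ‖∑ k, (((∑ j, y j k) / m - z k) ^ 2
        - (1 / ((m : ℝ) - 1)) * (((∑ j, y j k) / m) * (1 - (∑ j, y j k) / m)))‖ ≤ (K : ℝ) := by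
  have hm2 : (2 : ℝ) ≤ (m : ℝ) := by exact_mod_cast hm
  have hterm : ∀ k, ‖(((∑ j, y j k) / m - z k) ^ 2
      - (1 / ((m : ℝ) - 1)) * (((∑ j, y j k) / m) * (1 - (∑ j, y j k) / m)))‖ ≤ 1 := by
    intro k
    have hyk : ∀ j, 0 ≤ y j k ∧ y j k ≤ 1 := by
      intro j
      obtain ⟨k', hk'⟩ := hy j
      rw [hk']
      unfold oneHot
      rw [Pi.single_apply]
      by_cases h : k = k' <;> simp [h]
    have hS0 : 0 ≤ ∑ j, y j k := Finset.sum_nonneg fun j _ => (hyk j).1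
    have hS1 : ∑ j, y j k ≤ m := by
      calc ∑ j, y j k ≤ ∑ _j : Fin m, (1:ℝ) := Finset.sum_le_sum fun j _ => (hyk j).2
        _ = m := by simp
    have hmu0 : 0 ≤ (∑ j, y j k) / m := div_nonneg hS0 (by linarith)
    have hmu1 : (∑ j, y j k) / m ≤ 1 := by
      rw [div_le_one (by linarith : (0:ℝ) < m)]; exact hS1
    have hzk0 : 0 ≤ z k := hz0 k
    have hzk1 : z k ≤ 1 := by
      calc z k ≤ ∑ k', z k' := Finset.single_le_sum (fun k' _ => hz0 k') (Finset.mem_univ k)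
        _ = 1 := hz1
    have hd0 : 0 < (m : ℝ) - 1 := by linarith
    have hd1 : 1 / ((m : ℝ) - 1) ≤ 1 := by
      rw [div_le_one hd0]; linarith
    have hdpos : 0 < 1 / ((m : ℝ) - 1) := by positivity
    set μ := (∑ j, y j k) / m
    rw [Real.norm_eq_abs, abs_le]
    constructor
    · nlinarith [sq_nonneg (μ - z k), mul_nonneg hmu0 (by linarith : (0:ℝ) ≤ 1 - μ)]
    · nlinarith [mul_nonneg hmu0 (by linarith : (0:ℝ) ≤ 1 - μ), sq_nonneg (μ - z k)]
  calc ‖∑ k, (((∑ j, y j k) / m - z k) ^ 2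
      - (1 / ((m : ℝ) - 1)) * (((∑ j, y j k) / m) * (1 - (∑ j, y j k) / m)))‖
      ≤ ∑ k, ‖(((∑ j, y j k) / m - z k) ^ 2
        - (1 / ((m : ℝ) - 1)) * (((∑ j, y j k) / m) * (1 - (∑ j, y j k) / m)))‖ :=
        norm_sum_le _ _
    _ ≤ ∑ _k : Fin K, (1:ℝ) := Finset.sum_le_sum fun k _ => hterm k
    _ = (K : ℝ) := by simp

/-- unbiased estimator of the epistemic loss: inputs `X_i` are i.i.d. with
law `ν`; given `X_i = x` the `n i ≥ 2` labels of instance `i` are conditionally i.i.d. with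
law `Cat(Q(x))`; with `μ̂_{ik} = (1/nᵢ) ∑ⱼ Y_{ik}^{(j)}` and `z_i = f(X_i)`, the estimator
`(1/N) ∑ᵢ ∑ₖ [(μ̂_{ik} - z_{ik})² - μ̂_{ik}(1 - μ̂_{ik})/(nᵢ - 1)]`
has expectation `EL = E[‖Q(X) - f(X)‖²]`. -/
theorem stmt5
    {𝒳 : Type*} [MeasurableSpace 𝒳]
    (K N : ℕ) (hN : 0 < N)
    (ν : Measure 𝒳) [IsProbabilityMeasure ν]
    -- instance-wise class probability `Q`, measurable into the simplex
    (Q : 𝒳 → Fin K → ℝ) (hQ : Measurable Q)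
    (hQΔ : ∀ x, Q x ∈ stdSimplex ℝ (Fin K))
    -- conditional law of a single label: `Cat(Q(x))`
    (κ : Kernel 𝒳 (Fin K → ℝ)) [IsMarkovKernel κ]
    (hκ : ∀ x, κ x = catMeasure (Q x))
    -- numbers of annotators, at least two per instance
    (n : Fin N → ℕ) (hn : ∀ i, 2 ≤ n i)
    -- conditionally i.i.d. labels: kernel of `m` labels is the `m`-fold product of `κ`
    (κpi : (m : ℕ) → Kernel 𝒳 (Fin m → Fin K → ℝ))
    [∀ m, IsMarkovKernel (κpi m)]
    (hκpi : ∀ m x, κpi m x = Measure.pi fun _ : Fin m => κ x)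
    -- the classifier `f`, measurable into the simplex
    (f : 𝒳 → Fin K → ℝ) (hf : Measurable f)
    (hfΔ : ∀ x, f x ∈ stdSimplex ℝ (Fin K)) :
    -- instances are independent: the sample follows the product of the per-instance laws
    ∫ ω : (i : Fin N) → 𝒳 × (Fin (n i) → Fin K → ℝ),
        (1 / (N : ℝ)) * ∑ i, ∑ k,
          (((∑ j, (ω i).2 j k) / (n i) - f (ω i).1 k) ^ 2
            - (1 / ((n i : ℝ) - 1)) *
              (((∑ j, (ω i).2 j k) / (n i)) * (1 - (∑ j, (ω i).2 j k) / (n i))))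
      ∂(Measure.pi fun i => ν ⊗ₘ κpi (n i))
    = ∫ x, ∑ k, (Q x k - f x k) ^ 2 ∂ν := by
  classical
  set g : (i : Fin N) → 𝒳 × (Fin (n i) → Fin K → ℝ) → ℝ := fun i p =>
    ∑ k, (((∑ j, p.2 j k) / (n i) - f p.1 k) ^ 2
      - (1 / ((n i : ℝ) - 1)) * (((∑ j, p.2 j k) / (n i)) * (1 - (∑ j, p.2 j k) / (n i))))
    with hg
  have hmeas : ∀ i, Measurable (g i) := by
    intro i
    refine Finset.measurable_sum _ fun k _ => Measurable.sub ?_ ?_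
    all_goals {
      have hS : Measurable fun p : 𝒳 × (Fin (n i) → Fin K → ℝ) => ∑ j, p.2 j k :=
        Finset.measurable_sum _ fun j _ =>
          (measurable_pi_apply k).comp ((measurable_pi_apply j).comp measurable_snd)
      have hfk : Measurable fun p : 𝒳 × (Fin (n i) → Fin K → ℝ) => f p.1 k :=
        (measurable_pi_apply k).comp (hf.comp measurable_fst)
      first
      | exact ((hS.div_const _).sub hfk).pow_const 2
      | exact Measurable.const_mul
          ((hS.div_const _).mul (measurable_const.sub (hS.div_const _))) _
    }
  have hGmeas : ∀ i, MeasurableSet {p : 𝒳 × (Fin (n i) → Fin K → ℝ) |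
      ∀ j, ∃ k, p.2 j = oneHot K k} := by
    intro i
    have : {p : 𝒳 × (Fin (n i) → Fin K → ℝ) | ∀ j, ∃ k, p.2 j = oneHot K k}
        = ⋂ j, ⋃ k, (fun p : 𝒳 × (Fin (n i) → Fin K → ℝ) => p.2 j) ⁻¹' {oneHot K k} := by
      ext p; simp
    rw [this]
    exact MeasurableSet.iInter fun j => MeasurableSet.iUnion fun k =>
      ((measurable_pi_apply j).comp measurable_snd) (measurableSet_singleton _)
  have hbound : ∀ i, ∀ᵐ p ∂(ν ⊗ₘ κpi (n i)), ‖g i p‖ ≤ (K : ℝ) := by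
    intro i
    have hclass : ∀ᵐ p ∂(ν ⊗ₘ κpi (n i)), ∀ j, ∃ k, p.2 j = oneHot K k := by
      rw [Measure.ae_compProd_iff (hGmeas i)]
      refine Filter.Eventually.of_forall fun x => ?_
      rw [hκpi, hκ]
      exact ae_good (Q x)
    filter_upwards [hclass] with p hp
    exact bound_pointwise (hn i) (f p.1) (fun k => (hfΔ p.1).1 k) (hfΔ p.1).2 p.2 hp
  have hint : ∀ i, Integrable (g i) (ν ⊗ₘ κpi (n i)) := fun i =>
    (integrable_const (K : ℝ)).mono' (hmeas i).aestronglyMeasurable (hbound i)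
  have hval : ∀ i, ∫ p, g i p ∂(ν ⊗ₘ κpi (n i)) = ∫ x, ∑ k, (Q x k - f x k) ^ 2 ∂ν := by
    intro i
    rw [Measure.integral_compProd (hint i)]
    refine integral_congr_ae (Filter.Eventually.of_forall fun x => ?_)
    dsimp only
    rw [hκpi (n i) x, hκ x]
    exact core_expectation (hn i) (Q x) (f x) (fun k => (hQΔ x).1 k) (hQΔ x).2
  have hintc : ∀ i, Integrable (fun ω : (i : Fin N) → 𝒳 × (Fin (n i) → Fin K → ℝ) =>
      g i (ω i)) (Measure.pi fun i => ν ⊗ₘ κpi (n i)) := by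
    intro i
    have h := hint i
    rw [← pi_map_eval (fun i => ν ⊗ₘ κpi (n i)) i] at h
    exact (integrable_map_measure (hmeas i).aestronglyMeasurable
      (measurable_pi_apply i).aemeasurable).1 h
  calc ∫ ω : (i : Fin N) → 𝒳 × (Fin (n i) → Fin K → ℝ),
        (1 / (N : ℝ)) * ∑ i, ∑ k,
          (((∑ j, (ω i).2 j k) / (n i) - f (ω i).1 k) ^ 2
            - (1 / ((n i : ℝ) - 1)) *
              (((∑ j, (ω i).2 j k) / (n i)) * (1 - (∑ j, (ω i).2 j k) / (n i))))
      ∂(Measure.pi fun i => ν ⊗ₘ κpi (n i))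
      = ∫ ω : (i : Fin N) → 𝒳 × (Fin (n i) → Fin K → ℝ),
          (1 / (N : ℝ)) * ∑ i, g i (ω i) ∂(Measure.pi fun i => ν ⊗ₘ κpi (n i)) := rfl
    _ = (1 / (N : ℝ)) * ∫ ω : (i : Fin N) → 𝒳 × (Fin (n i) → Fin K → ℝ),
          ∑ i, g i (ω i) ∂(Measure.pi fun i => ν ⊗ₘ κpi (n i)) := by
        rw [integral_const_mul]
    _ = (1 / (N : ℝ)) * ∑ i, ∫ ω : (i : Fin N) → 𝒳 × (Fin (n i) → Fin K → ℝ),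
          g i (ω i) ∂(Measure.pi fun i => ν ⊗ₘ κpi (n i)) := by
        rw [integral_finset_sum _ fun i _ => hintc i]
    _ = (1 / (N : ℝ)) * ∑ i : Fin N, ∫ x, ∑ k, (Q x k - f x k) ^ 2 ∂ν := by
        congr 1
        refine Finset.sum_congr rfl fun i _ => ?_
        rw [← hval i, ← pi_map_eval (fun i => ν ⊗ₘ κpi (n i)) i,
          integral_map (measurable_pi_apply i).aemeasurable]
        rw [pi_map_eval (fun i => ν ⊗ₘ κpi (n i)) i]
        exact (hmeas i).aestronglyMeasurable
    _ = ∫ x, ∑ k, (Q x k - f x k) ^ 2 ∂ν := by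
        rw [Finset.sum_const, Finset.card_univ, Fintype.card_fin, nsmul_eq_mul]
        have hN' : (N : ℝ) ≠ 0 := Nat.cast_ne_zero.2 hN.ne'
        field_simp
end

section
/- Let (z_i, μ̂_i), i = 1,…,N, be i.i.d. random pairs with values in [0,1] × [0,1], let B ⊆ [0,1] be a measurable bin with P(z_1 ∈ B) > 0, and set I = { i ≤ N : z_i ∈ B }, c̄ = (1/|I|) Σ_{i∈I} μ̂_i, σ̄² = (1/|I|) Σ_{i∈I} μ̂_i² − c̄², and Û = (1/(|I|(|I|−1))) Σ_{i,i'∈I, i≠i'} μ̂_i μ̂_{i'} (these defined when |I| ≥ 2). Then: (a) on the event |I| ≥ 2, the deterministic identity (|I|/N) c̄² − (|I|/N) Û = (|I|/N) · σ̄²/(|I|−1) holds, so the debiased calibration-loss estimator (|I|/N)(c̄ − z̄)² − (|I|/N) σ̄²/(|I|−1) differs from the plugin estimator (|I|/N)(c̄ − z̄)² exactly by this correction term for any z̄; and (b) E[ (|I|/N) Û · 1{|I| ≥ 2} ] = ( P(z_1 ∈ B) − E[|I| · 1{|I| ≤ 1}]/N ) · C̄², where C̄ = E[ μ̂_1 |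 z_1 ∈ B ]. -/
open MeasureTheory

open scoped Classical in
/-- The random index set `I = {i ≤ N : z_i ∈ B}` of instances falling in bin `B`, where
`ω i = (z_i, μ̂_i)`. -/
noncomputable def binIdx {N : ℕ} (B : Set ℝ) (ω : Fin N → ℝ × ℝ) : Finset (Fin N) :=
  Finset.univ.filter fun i => (ω i).1 ∈ B

/-- The bin average `c̄ = (1/|I|) ∑_{i ∈ I} μ̂_i`. -/
noncomputable def cbar {N : ℕ} (B : Set ℝ) (ω : Fin N → ℝ × ℝ) : ℝ :=
  (∑ i ∈ binIdx B ω, (ω i).2) / (binIdx B ω).card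

/-- The bin variance `σ̄² = (1/|I|) ∑_{i ∈ I} μ̂_i² - c̄²`. -/
noncomputable def sigbar2 {N : ℕ} (B : Set ℝ) (ω : Fin N → ℝ × ℝ) : ℝ :=
  (∑ i ∈ binIdx B ω, (ω i).2 ^ 2) / (binIdx B ω).card - cbar B ω ^ 2

/-- The U-statistic `Û = (1/(|I|(|I|-1))) ∑_{i ≠ i' ∈ I} μ̂_i μ̂_{i'}`. -/
noncomputable def ubar {N : ℕ} (B : Set ℝ) (ω : Fin N → ℝ × ℝ) : ℝ :=
  (∑ i ∈ binIdx B ω, ∑ i' ∈ (binIdx B ω).erase i, (ω i).2 * (ω i').2)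
    / ((binIdx B ω).card * ((binIdx B ω).card - 1))

open scoped Classical

/-! ### Auxiliary lemmas -/

section Aux

lemma aux_double_sum {ι : Type*} [DecidableEq ι] (s : Finset ι) (f : ι → ℝ) :
    ∑ i ∈ s, ∑ i' ∈ s.erase i, f i * f i' = (∑ i ∈ s, f i)^2 - ∑ i ∈ s, f i ^ 2 := by
  have h : ∀ i ∈ s, ∑ i' ∈ s.erase i, f i * f i' = f i * ((∑ j ∈ s, f j) - f i) := by
    intro i hi
    rw [← Finset.mul_sum, Finset.sum_erase_eq_sub hi]
  rw [Finset.sum_congr rfl h]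
  simp_rw [mul_sub]
  rw [Finset.sum_sub_distrib, ← Finset.sum_mul, sq]
  congr 1
  exact Finset.sum_congr rfl fun i _ => (sq (f i)).symm ▸ (pow_two (f i)).symm

lemma aux_partA {N : ℕ} (B : Set ℝ) (ω : Fin N → ℝ × ℝ) (h : 2 ≤ (binIdx B ω).card) :
    ((binIdx B ω).card : ℝ) / N * cbar B ω ^ 2
          - ((binIdx B ω).card : ℝ) / N * ubar B ω
        = ((binIdx B ω).card : ℝ) / N * (sigbar2 B ω / (((binIdx B ω).card : ℝ) - 1)) := by
  have hc : (2:ℝ) ≤ ((binIdx B ω).card : ℝ) := by exact_mod_cast h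
  have hc0 : ((binIdx B ω).card : ℝ) ≠ 0 := by linarith
  have hc1 : ((binIdx B ω).card : ℝ) - 1 ≠ 0 := by linarith
  simp only [ubar, sigbar2, cbar]
  rw [aux_double_sum]
  by_cases hN : (N:ℝ) = 0
  · simp [hN, cbar]
  · field_simp
    ring

lemma mem_binIdx {N : ℕ} {B : Set ℝ} {ω : Fin N → ℝ × ℝ} {j : Fin N} :
    j ∈ binIdx B ω ↔ (ω j).1 ∈ B := by simp [binIdx]

/-- coordinate factor functions for the U-statistic decomposition -/
noncomputable def gfun {N : ℕ} (B : Set ℝ) (i i' : Fin N) (S : Finset (Fin N)) (j : Fin N) :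
    ℝ × ℝ → ℝ := fun p =>
  if j = i ∨ j = i' then (if p.1 ∈ B then p.2 else 0)
  else if j ∈ S then (if p.1 ∈ B then 1 else 0)
  else (if p.1 ∈ B then 0 else 1)

/-- coordinate factor functions for the `|I| = 1` indicator -/
noncomputable def hfun {N : ℕ} (B : Set ℝ) (i j : Fin N) : ℝ × ℝ → ℝ := fun p =>
  if j = i then (if p.1 ∈ B then 1 else 0) else (if p.1 ∈ B then 0 else 1)

lemma prod_gfun_eval {N : ℕ} (B : Set ℝ) (i i' : Fin N) (hne : i' ≠ i)
    (S : Finset (Fin N)) (ω : Fin N → ℝ × ℝ) :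
    ∏ j, gfun B i i' S j (ω j)
      = (if (ω i).1 ∈ B then (ω i).2 else 0) * ((if (ω i').1 ∈ B then (ω i').2 else 0)
        * ∏ j ∈ (Finset.univ.erase i).erase i',
            (if j ∈ S then (if (ω j).1 ∈ B then (1:ℝ) else 0)
              else (if (ω j).1 ∈ B then 0 else 1))) := by
  rw [← Finset.mul_prod_erase Finset.univ _ (Finset.mem_univ i)]
  rw [← Finset.mul_prod_erase (Finset.univ.erase i) _
      (Finset.mem_erase.2 ⟨hne, Finset.mem_univ i'⟩)]
  congr 1
  · simp [gfun]
  congr 1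
  · simp [gfun]
  · refine Finset.prod_congr rfl fun j hj => ?_
    rw [Finset.mem_erase, Finset.mem_erase] at hj
    simp [gfun, hj.1, hj.2.1]

lemma pairEq {N : ℕ} (B : Set ℝ) (ω : Fin N → ℝ × ℝ) (i i' : Fin N) (hne : i' ≠ i) :
    ∑ S ∈ ((Finset.univ.erase i).erase i').powerset,
        (1 / (N * (S.card + 1)) : ℝ) * ∏ j, gfun B i i' S j (ω j)
      = if (ω i).1 ∈ B ∧ (ω i').1 ∈ B
        then (ω i).2 * (ω i').2 / (N * (((binIdx B ω).card : ℝ) - 1)) else 0 := by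
  by_cases hBi : (ω i).1 ∈ B ∧ (ω i').1 ∈ B
  · rw [if_pos hBi]
    set base := (Finset.univ.erase i).erase i' with hbase
    set T := ((binIdx B ω).erase i).erase i' with hT
    have hTbase : T ⊆ base := by
      apply Finset.erase_subset_erase
      apply Finset.erase_subset_erase
      exact Finset.subset_univ _
    have hi : i ∈ binIdx B ω := mem_binIdx.2 hBi.1
    have hi' : i' ∈ (binIdx B ω).erase i := Finset.mem_erase.2 ⟨hne, mem_binIdx.2 hBi.2⟩
    have hcard2 : 2 ≤ (binIdx B ω).card := by
      rw [Nat.succ_le_iff]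
      exact Finset.one_lt_card.2 ⟨i', Finset.mem_of_mem_erase hi', i, hi,
          (Finset.ne_of_mem_erase hi')⟩
    have hTcard : (T.card : ℝ) + 1 = ((binIdx B ω).card : ℝ) - 1 := by
      rw [hT, Finset.card_erase_of_mem hi', Finset.card_erase_of_mem hi]
      have h1 : 1 ≤ (binIdx B ω).card := le_trans (by norm_num) hcard2
      push_cast [Nat.cast_sub (by omega : 1 ≤ (binIdx B ω).card - 1),
        Nat.cast_sub h1]
      ring
    rw [Finset.sum_eq_single T]
    · rw [prod_gfun_eval B i i' hne T ω, if_pos hBi.1, if_pos hBi.2]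
      have hprod : ∏ j ∈ base,
          (if j ∈ T then (if (ω j).1 ∈ B then (1:ℝ) else 0)
            else (if (ω j).1 ∈ B then 0 else 1)) = 1 := by
        apply Finset.prod_eq_one
        intro j hj
        have hj1 : j ≠ i' := Finset.ne_of_mem_erase hj
        have hj2 : j ≠ i := Finset.ne_of_mem_erase (Finset.mem_of_mem_erase hj)
        by_cases hjT : j ∈ T
        · have : (ω j).1 ∈ B := mem_binIdx.1
            (Finset.mem_of_mem_erase (Finset.mem_of_mem_erase hjT))
          simp [hjT, this]
        · have : (ω j).1 ∉ B := by
            intro hmem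
            exact hjT (Finset.mem_erase.2 ⟨hj1, Finset.mem_erase.2 ⟨hj2, mem_binIdx.2 hmem⟩⟩)
          simp [hjT, this]
      rw [hprod, hTcard]
      ring
    · intro S hS hSne
      rw [prod_gfun_eval B i i' hne S ω]
      have : ∃ j ∈ base, (if j ∈ S then (if (ω j).1 ∈ B then (1:ℝ) else 0)
          else (if (ω j).1 ∈ B then 0 else 1)) = 0 := by
        have hSbase : S ⊆ base := Finset.mem_powerset.1 hS
        have : ∃ j, ¬(j ∈ S ↔ j ∈ T) := by
          by_contra hcon
          push_neg at hcon
          exact hSne (Finset.ext fun a => hcon a)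
        obtain ⟨j, hj⟩ := this
        have hj' : (j ∈ S ∧ j ∉ T) ∨ (j ∈ T ∧ j ∉ S) := by tauto
        rcases hj' with ⟨hjS, hjT⟩ | ⟨hjT, hjS⟩
        · refine ⟨j, hSbase hjS, ?_⟩
          have hj1 : j ≠ i' := Finset.ne_of_mem_erase (hSbase hjS)
          have hj2 : j ≠ i := Finset.ne_of_mem_erase (Finset.mem_of_mem_erase (hSbase hjS))
          have : (ω j).1 ∉ B := by
            intro hmem
            exact hjT (Finset.mem_erase.2 ⟨hj1, Finset.mem_erase.2 ⟨hj2, mem_binIdx.2 hmem⟩⟩)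
          simp [hjS, this]
        · refine ⟨j, hTbase hjT, ?_⟩
          have : (ω j).1 ∈ B := mem_binIdx.1
            (Finset.mem_of_mem_erase (Finset.mem_of_mem_erase hjT))
          simp [hjS, this]
      obtain ⟨j, hjb, hj0⟩ := this
      rw [Finset.prod_eq_zero hjb hj0]
      ring
    · intro hT'
      exact absurd (Finset.mem_powerset.2 hTbase) hT'
  · rw [if_neg hBi]
    apply Finset.sum_eq_zero
    intro S hS
    rw [prod_gfun_eval B i i' hne S ω]
    rcases not_and_or.1 hBi with h | h
    · rw [if_neg h]; ring
    · rw [if_neg h]; ring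

lemma pointwiseU {N : ℕ} (B : Set ℝ) (ω : Fin N → ℝ × ℝ) :
    (if 2 ≤ (binIdx B ω).card then ((binIdx B ω).card : ℝ) / N * ubar B ω else 0)
      = ∑ i, ∑ i' ∈ Finset.univ.erase i,
          (if (ω i).1 ∈ B ∧ (ω i').1 ∈ B
            then (ω i).2 * (ω i').2 / (N * (((binIdx B ω).card : ℝ) - 1)) else 0) := by
  set c := (binIdx B ω).card with hc
  have key : ∀ i : Fin N, ∑ i' ∈ Finset.univ.erase i,
      (if (ω i).1 ∈ B ∧ (ω i').1 ∈ B
        then (ω i).2 * (ω i').2 / (N * ((c : ℝ) - 1)) else 0)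
      = if (ω i).1 ∈ B then
          ∑ i' ∈ (binIdx B ω).erase i, (ω i).2 * (ω i').2 / (N * ((c : ℝ) - 1)) else 0 := by
    intro i
    by_cases hi : (ω i).1 ∈ B
    · rw [if_pos hi]
      have hfe : (Finset.univ.erase i).filter (fun j => (ω j).1 ∈ B) = (binIdx B ω).erase i := by
        ext a
        simp only [Finset.mem_filter, Finset.mem_erase, Finset.mem_univ, mem_binIdx, true_and]
        tauto
      rw [← hfe, Finset.sum_filter]
      refine Finset.sum_congr rfl fun i' _ => ?_
      simp [hi]
    · rw [if_neg hi]
      apply Finset.sum_eq_zero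
      intro i' _
      rw [if_neg (by tauto)]
  rw [Finset.sum_congr rfl fun i _ => key i]
  have hfe2 : (Finset.univ : Finset (Fin N)).filter (fun j => (ω j).1 ∈ B) = binIdx B ω := rfl
  rw [← Finset.sum_filter, hfe2]
  by_cases h2 : 2 ≤ c
  · rw [if_pos h2]
    have hc2 : (2:ℝ) ≤ (c:ℝ) := by exact_mod_cast h2
    have hcc : ((c:ℝ)) ≠ 0 := by linarith
    have hc1 : ((c:ℝ)) - 1 ≠ 0 := by linarith
    rw [ubar, ← hc]
    simp_rw [div_eq_mul_inv, ← Finset.sum_mul]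
    by_cases hN : (N:ℝ) = 0
    · simp [hN]
    · field_simp
  · rw [if_neg h2]
    symm
    apply Finset.sum_eq_zero
    intro i hi
    apply Finset.sum_eq_zero
    intro i' hi'
    exfalso
    apply h2
    rw [Nat.succ_le_iff, hc]
    exact Finset.one_lt_card.2 ⟨i, hi, i', Finset.mem_of_mem_erase hi',
      fun h => (Finset.ne_of_mem_erase hi') h.symm⟩

lemma hfun_prod {N : ℕ} (B : Set ℝ) (i : Fin N) (ω : Fin N → ℝ × ℝ) :
    ∏ j, hfun B i j (ω j) = if binIdx B ω = {i} then 1 else 0 := by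
  by_cases h : binIdx B ω = {i}
  · rw [if_pos h]
    apply Finset.prod_eq_one
    intro j _
    by_cases hj : j = i
    · subst hj
      have : (ω j).1 ∈ B := mem_binIdx.1 (by rw [h]; exact Finset.mem_singleton_self j)
      simp [hfun, this]
    · have : (ω j).1 ∉ B := by
        intro hmem
        have := mem_binIdx.2 hmem
        rw [h, Finset.mem_singleton] at this
        exact hj this
      simp [hfun, hj, this]
  · rw [if_neg h]
    by_cases hi : (ω i).1 ∈ B
    · have : ∃ j ∈ binIdx B ω, j ≠ i := by
        by_contra hcon
        push_neg at hcon
        apply h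
        apply Finset.Subset.antisymm
        · intro a ha
          rw [Finset.mem_singleton]
          exact hcon a ha
        · intro a ha
          rw [Finset.mem_singleton] at ha
          rw [ha]
          exact mem_binIdx.2 hi
      obtain ⟨j, hj, hjne⟩ := this
      refine Finset.prod_eq_zero (Finset.mem_univ j) ?_
      simp [hfun, hjne, mem_binIdx.1 hj]
    · refine Finset.prod_eq_zero (Finset.mem_univ i) ?_
      simp [hfun, hi]

lemma pointwise1 {N : ℕ} (B : Set ℝ) (ω : Fin N → ℝ × ℝ) :
    (if (binIdx B ω).card ≤ 1 then ((binIdx B ω).card : ℝ) else 0)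
      = ∑ i, ∏ j, hfun B i j (ω j) := by
  simp_rw [hfun_prod]
  rcases Nat.lt_or_ge (binIdx B ω).card 2 with h2 | h2
  · interval_cases h : (binIdx B ω).card
    · have he : binIdx B ω = ∅ := Finset.card_eq_zero.1 h
      rw [if_pos (by omega)]
      rw [Finset.sum_eq_zero fun i _ =>
        if_neg (by rw [he]; exact fun hc => Finset.singleton_ne_empty i hc.symm)]
      simp [h]
    · obtain ⟨i0, hi0⟩ := Finset.card_eq_one.1 h
      rw [if_pos (by omega)]
      rw [Finset.sum_eq_single i0]
      · simp [hi0, h]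
      · intro b _ hb
        rw [if_neg]
        rw [hi0]
        intro hcon
        exact hb (Finset.singleton_injective hcon).symm
      · intro hcon
        exact absurd (Finset.mem_univ i0) hcon
  · rw [if_neg (by omega)]
    symm
    apply Finset.sum_eq_zero
    intro i _
    rw [if_neg]
    intro hcon
    rw [hcon, Finset.card_singleton] at h2
    omega

lemma measB (B : Set ℝ) (hB : MeasurableSet B) : MeasurableSet {p : ℝ × ℝ | p.1 ∈ B} :=
  measurable_fst hB

lemma int_snd (m : Measure (ℝ × ℝ)) (B : Set ℝ) (hB : MeasurableSet B) :
    ∫ p : ℝ × ℝ, (if p.1 ∈ B then p.2 else 0) ∂m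
      = ∫ p in {p : ℝ × ℝ | p.1 ∈ B}, p.2 ∂m := by
  rw [← integral_indicator (measB B hB)]
  congr 1

lemma int_one (m : Measure (ℝ × ℝ)) (B : Set ℝ) (hB : MeasurableSet B) :
    ∫ p : ℝ × ℝ, (if p.1 ∈ B then (1:ℝ) else 0) ∂m
      = (m {p : ℝ × ℝ | p.1 ∈ B}).toReal := by
  have h : (fun p : ℝ × ℝ => if p.1 ∈ B then (1:ℝ) else 0)
      = Set.indicator {p : ℝ × ℝ | p.1 ∈ B} (fun _ => (1:ℝ)) := by
    ext p; simp [Set.indicator_apply]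
  rw [h, integral_indicator_const (1:ℝ) (measB B hB)]
  simp
  rfl

lemma integrable_one_ind (m : Measure (ℝ × ℝ)) [IsProbabilityMeasure m] (B : Set ℝ)
    (hB : MeasurableSet B) :
    Integrable (fun p : ℝ × ℝ => if p.1 ∈ B then (1:ℝ) else 0) m := by
  refine Integrable.mono' (integrable_const 1) ?_ ?_
  · exact ((measurable_const.ite (measB B hB) measurable_const)).aestronglyMeasurable
  · refine Filter.Eventually.of_forall fun p => ?_
    by_cases h : p.1 ∈ B <;> simp [h]

lemma int_zero_one (m : Measure (ℝ × ℝ)) [IsProbabilityMeasure m] (B : Set ℝ)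
    (hB : MeasurableSet B) :
    ∫ p : ℝ × ℝ, (if p.1 ∈ B then (0:ℝ) else 1) ∂m
      = 1 - (m {p : ℝ × ℝ | p.1 ∈ B}).toReal := by
  have h : (fun p : ℝ × ℝ => if p.1 ∈ B then (0:ℝ) else 1)
      = fun p : ℝ × ℝ => 1 - (if p.1 ∈ B then (1:ℝ) else 0) := by
    ext p; by_cases h : p.1 ∈ B <;> simp [h]
  rw [h, integral_sub (integrable_const 1) (integrable_one_ind m B hB), integral_const,
    int_one m B hB]
  simp

lemma integrable_snd_ind (m : Measure (ℝ × ℝ)) [IsProbabilityMeasure m] (B : Set ℝ)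
    (hB : MeasurableSet B)
    (hm : ∀ᵐ p ∂m, p.1 ∈ Set.Icc (0 : ℝ) 1 ∧ p.2 ∈ Set.Icc (0 : ℝ) 1) :
    Integrable (fun p : ℝ × ℝ => if p.1 ∈ B then p.2 else 0) m := by
  refine Integrable.mono' (integrable_const 1) ?_ ?_
  · exact ((measurable_snd.ite (measB B hB) measurable_const)).aestronglyMeasurable
  · filter_upwards [hm] with p hp
    obtain ⟨-, h0, h1⟩ := hp
    by_cases h : p.1 ∈ B <;> simp [h]
    rw [abs_le]; constructor <;> linarith

lemma integrable_zero_one_ind (m : Measure (ℝ × ℝ)) [IsProbabilityMeasure m] (B : Set ℝ)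
    (hB : MeasurableSet B) :
    Integrable (fun p : ℝ × ℝ => if p.1 ∈ B then (0:ℝ) else 1) m := by
  refine Integrable.mono' (integrable_const 1) ?_ ?_
  · exact ((measurable_const.ite (measB B hB) measurable_const)).aestronglyMeasurable
  · refine Filter.Eventually.of_forall fun p => ?_
    by_cases h : p.1 ∈ B <;> simp [h]

lemma integral_pi_prod (N : ℕ) (m : Measure (ℝ × ℝ)) [IsProbabilityMeasure m]
    (f : Fin N → ℝ × ℝ → ℝ) :
    ∫ ω : Fin N → ℝ × ℝ, ∏ j, f j (ω j) ∂(Measure.pi fun _ : Fin N => m)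
      = ∏ j, ∫ p, f j p ∂m := by
  letI : MeasureSpace (ℝ × ℝ) := ⟨m⟩
  rw [show (Measure.pi fun _ : Fin N => m) = (volume : Measure (Fin N → ℝ × ℝ)) from
    volume_pi.symm]
  exact integral_fintype_prod_eq_prod (ι := Fin N) f

lemma integrable_pi_prod (N : ℕ) (m : Measure (ℝ × ℝ)) [IsProbabilityMeasure m]
    (f : Fin N → ℝ × ℝ → ℝ) (hf : ∀ j, Integrable (f j) m) :
    Integrable (fun ω : Fin N → ℝ × ℝ => ∏ j, f j (ω j)) (Measure.pi fun _ : Fin N => m) := by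
  letI : MeasureSpace (ℝ × ℝ) := ⟨m⟩
  rw [show (Measure.pi fun _ : Fin N => m) = (volume : Measure (Fin N → ℝ × ℝ)) from
    volume_pi.symm]
  exact Integrable.fintype_prod hf

lemma integrable_gfun_prod {N : ℕ} (m : Measure (ℝ × ℝ)) [IsProbabilityMeasure m] (B : Set ℝ)
    (hB : MeasurableSet B) (hm : ∀ᵐ p ∂m, p.1 ∈ Set.Icc (0 : ℝ) 1 ∧ p.2 ∈ Set.Icc (0 : ℝ) 1)
    (i i' : Fin N) (S : Finset (Fin N)) :
    Integrable (fun ω : Fin N → ℝ × ℝ => ∏ j, gfun B i i' S j (ω j))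
      (Measure.pi fun _ : Fin N => m) := by
  apply integrable_pi_prod
  intro j
  show Integrable (fun p => gfun B i i' S j p) m
  by_cases h : j = i ∨ j = i'
  · simp only [gfun, if_pos h]
    exact integrable_snd_ind m B hB hm
  · by_cases h2 : j ∈ S
    · simp only [gfun, if_neg h, if_pos h2]
      exact integrable_one_ind m B hB
    · simp only [gfun, if_neg h, if_neg h2]
      exact integrable_zero_one_ind m B hB

lemma integral_gfun_prod {N : ℕ} (m : Measure (ℝ × ℝ)) [IsProbabilityMeasure m] (B : Set ℝ)
    (hB : MeasurableSet B) (i i' : Fin N) (hne : i' ≠ i) (S : Finset (Fin N))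
    (hS : S ⊆ (Finset.univ.erase i).erase i') :
    ∫ ω : Fin N → ℝ × ℝ, ∏ j, gfun B i i' S j (ω j) ∂(Measure.pi fun _ : Fin N => m)
      = (∫ p in {p : ℝ × ℝ | p.1 ∈ B}, p.2 ∂m) ^ 2
        * (m {p : ℝ × ℝ | p.1 ∈ B}).toReal ^ S.card
        * (1 - (m {p : ℝ × ℝ | p.1 ∈ B}).toReal) ^ (N - 2 - S.card) := by
  set A := ∫ p in {p : ℝ × ℝ | p.1 ∈ B}, p.2 ∂m
  set q := (m {p : ℝ × ℝ | p.1 ∈ B}).toReal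
  rw [integral_pi_prod]
  have hv : ∀ j, ∫ p, gfun B i i' S j p ∂m
      = if j = i ∨ j = i' then A else if j ∈ S then q else 1 - q := by
    intro j
    by_cases h : j = i ∨ j = i'
    · simp only [gfun, if_pos h]
      rw [int_snd m B hB]
    · by_cases h2 : j ∈ S
      · simp only [gfun, if_neg h, if_pos h2]
        rw [int_one m B hB]
      · simp only [gfun, if_neg h, if_neg h2]
        rw [int_zero_one m B hB]
  rw [Finset.prod_congr rfl fun j _ => hv j]
  have hdecomp : (Finset.univ : Finset (Fin N))
      = ({i, i'} : Finset (Fin N)) ∪ ((Finset.univ.erase i).erase i') := by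
    ext a
    simp only [Finset.mem_univ, Finset.mem_union, Finset.mem_insert, Finset.mem_singleton,
      Finset.mem_erase, true_iff, true_and]
    tauto
  have hdisj : Disjoint ({i, i'} : Finset (Fin N)) ((Finset.univ.erase i).erase i') := by
    rw [Finset.disjoint_left]
    intro a ha ha2
    rw [Finset.mem_insert, Finset.mem_singleton] at ha
    rw [Finset.mem_erase, Finset.mem_erase] at ha2
    tauto
  rw [hdecomp, Finset.prod_union hdisj]
  have hpair : ∏ j ∈ ({i, i'} : Finset (Fin N)),
      (if j = i ∨ j = i' then A else if j ∈ S then q else 1 - q) = A ^ 2 := by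
    rw [Finset.prod_pair (Ne.symm hne)]
    rw [if_pos (Or.inl rfl), if_pos (Or.inr rfl)]
    ring
  rw [hpair]
  have hbase : (Finset.univ.erase i).erase i' = S ∪ ((Finset.univ.erase i).erase i' \ S) :=
    (Finset.union_sdiff_of_subset hS).symm
  rw [hbase, Finset.prod_union Finset.disjoint_sdiff]
  have hSprod : ∏ j ∈ S, (if j = i ∨ j = i' then A else if j ∈ S then q else 1 - q)
      = q ^ S.card := by
    rw [← Finset.prod_const]
    refine Finset.prod_congr rfl fun j hj => ?_
    have h1 : j ≠ i' := Finset.ne_of_mem_erase (hS hj)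
    have h2 : j ≠ i := Finset.ne_of_mem_erase (Finset.mem_of_mem_erase (hS hj))
    rw [if_neg (by tauto), if_pos hj]
  have hRcard : ((Finset.univ.erase i).erase i' \ S).card = N - 2 - S.card := by
    rw [Finset.card_sdiff_of_subset hS, Finset.card_erase_of_mem
      (Finset.mem_erase.2 ⟨hne, Finset.mem_univ i'⟩), Finset.card_erase_of_mem
      (Finset.mem_univ i), Finset.card_univ, Fintype.card_fin]
    omega
  have hRprod : ∏ j ∈ (Finset.univ.erase i).erase i' \ S,
      (if j = i ∨ j = i' then A else if j ∈ S then q else 1 - q)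
      = (1 - q) ^ (N - 2 - S.card) := by
    rw [← hRcard, ← Finset.prod_const]
    refine Finset.prod_congr rfl fun j hj => ?_
    rw [Finset.mem_sdiff] at hj
    have h1 : j ≠ i' := Finset.ne_of_mem_erase hj.1
    have h2 : j ≠ i := Finset.ne_of_mem_erase (Finset.mem_of_mem_erase hj.1)
    rw [if_neg (by tauto), if_neg hj.2]
  rw [hSprod, hRprod]
  ring

lemma sum_powerset_card {α : Type*} [DecidableEq α] (s : Finset α) (f : ℕ → ℝ) :
    ∑ S ∈ s.powerset, f S.card
      = ∑ k ∈ Finset.range (s.card + 1), (s.card.choose k : ℝ) * f k := by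
  rw [Finset.sum_powerset_apply_card]
  simp only [nsmul_eq_mul]

lemma binom_aux (n : ℕ) (q : ℝ) (hq : q ≠ 0) :
    ∑ k ∈ Finset.range (n + 1), ((n.choose k : ℝ) * q ^ k * (1 - q) ^ (n - k) / (k + 1))
      = (1 - (1 - q) ^ (n + 1)) / ((n + 1) * q) := by
  have hn1 : ((n : ℝ) + 1) ≠ 0 := by positivity
  rw [eq_div_iff (mul_ne_zero hn1 hq)]
  have step : ∀ k ∈ Finset.range (n + 1),
      ((n.choose k : ℝ) * q ^ k * (1 - q) ^ (n - k) / (k + 1)) * (((n:ℝ) + 1) * q)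
        = q ^ (k+1) * (1 - q) ^ (n + 1 - (k+1)) * (((n+1).choose (k+1) : ℕ) : ℝ) := by
    intro k _
    have hch : ((n + 1) : ℝ) * (n.choose k : ℝ) = ((n+1).choose (k+1) : ℝ) * ((k:ℝ) + 1) := by
      exact_mod_cast congrArg (Nat.cast : ℕ → ℝ) (Nat.add_one_mul_choose_eq n k)
    have hk1 : ((k:ℝ) + 1) ≠ 0 := by positivity
    have hexp : n + 1 - (k + 1) = n - k := by omega
    rw [hexp]
    field_simp
    linear_combination (q ^ k * q * (1 - q) ^ (n - k)) * hch
  rw [Finset.sum_mul, Finset.sum_congr rfl step]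
  have hb := add_pow q (1 - q) (n + 1)
  rw [show q + (1 - q) = 1 by ring, one_pow] at hb
  rw [Finset.sum_range_succ'
    (fun k => q ^ k * (1 - q) ^ (n + 1 - k) * ((n+1).choose k : ℝ)) (n + 1)] at hb
  simp only [pow_zero, Nat.sub_zero, Nat.choose_zero_right, Nat.cast_one, one_mul, mul_one] at hb
  linarith

end Aux

/-- for i.i.d. pairs `(z_i, μ̂_i) ∈ [0,1]²` and a bin `B` with
`P(z_1 ∈ B) > 0`: (a) on `|I| ≥ 2` the deterministic identity
`(|I|/N) c̄² - (|I|/N) Û = (|I|/N) σ̄²/(|I|-1)` holds, so the debiased calibration-loss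
estimator differs from the plugin one exactly by this correction for any `z̄`;
(b) `E[(|I|/N) Û · 1{|I| ≥ 2}] = (P(z_1 ∈ B) - E[|I| · 1{|I| ≤ 1}]/N) C̄²`
with `C̄ = E[μ̂_1 | z_1 ∈ B]`. -/
theorem stmt7
    (N : ℕ) (hN : 0 < N)
    (m : Measure (ℝ × ℝ)) [IsProbabilityMeasure m]
    (hm : ∀ᵐ p ∂m, p.1 ∈ Set.Icc (0 : ℝ) 1 ∧ p.2 ∈ Set.Icc (0 : ℝ) 1)
    (B : Set ℝ) (hB : MeasurableSet B)
    (hBpos : 0 < m {p | p.1 ∈ B}) :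
    (∀ ω : Fin N → ℝ × ℝ, 2 ≤ (binIdx B ω).card →
      (((binIdx B ω).card : ℝ) / N * cbar B ω ^ 2
          - ((binIdx B ω).card : ℝ) / N * ubar B ω
        = ((binIdx B ω).card : ℝ) / N * (sigbar2 B ω / (((binIdx B ω).card : ℝ) - 1)))
      ∧ ∀ zbar : ℝ,
          ((binIdx B ω).card : ℝ) / N * (cbar B ω - zbar) ^ 2
              - ((binIdx B ω).card : ℝ) / N * (sigbar2 B ω / (((binIdx B ω).card : ℝ) - 1))
            = ((binIdx B ω).card : ℝ) / N * (cbar B ω - zbar) ^ 2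
              - (((binIdx B ω).card : ℝ) / N * cbar B ω ^ 2
                - ((binIdx B ω).card : ℝ) / N * ubar B ω))
    ∧ ∫ ω : Fin N → ℝ × ℝ,
          (if 2 ≤ (binIdx B ω).card then ((binIdx B ω).card : ℝ) / N * ubar B ω else 0)
        ∂(Measure.pi fun _ : Fin N => m)
      = ((m {p | p.1 ∈ B}).toReal
          - (∫ ω : Fin N → ℝ × ℝ,
              (if (binIdx B ω).card ≤ 1 then ((binIdx B ω).card : ℝ) else 0)
              ∂(Measure.pi fun _ : Fin N => m)) / N)
        * ((∫ p in {p : ℝ × ℝ | p.1 ∈ B}, p.2 ∂m) / (m {p | p.1 ∈ B}).toReal) ^ 2 := by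
  constructor
  · intro ω h2
    have h1 := aux_partA B ω h2
    exact ⟨h1, fun zbar => by rw [h1]⟩
  · set q := (m {p : ℝ × ℝ | p.1 ∈ B}).toReal with hqdef
    set A := ∫ p in {p : ℝ × ℝ | p.1 ∈ B}, p.2 ∂m with hAdef
    have hq0 : 0 < q := ENNReal.toReal_pos hBpos.ne' (measure_ne_top m _)
    have hNr : (N:ℝ) ≠ 0 := Nat.cast_ne_zero.2 hN.ne'
    -- second integral
    have hint2 : (∫ ω : Fin N → ℝ × ℝ,
          (if (binIdx B ω).card ≤ 1 then ((binIdx B ω).card : ℝ) else 0)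
          ∂(Measure.pi fun _ : Fin N => m)) = N * (q * (1-q)^(N-1)) := by
      rw [integral_congr_ae (Filter.Eventually.of_forall (fun ω => pointwise1 B ω))]
      rw [integral_finset_sum _ (fun i _ => integrable_pi_prod N m _ (fun j => by
        show Integrable (fun p => hfun B i j p) m
        by_cases h : j = i
        · simp only [hfun, if_pos h]
          exact integrable_one_ind m B hB
        · simp only [hfun, if_neg h]
          exact integrable_zero_one_ind m B hB))]
      have hval : ∀ i : Fin N,
          (∫ ω : Fin N → ℝ × ℝ, ∏ j, hfun B i j (ω j) ∂(Measure.pi fun _ : Fin N => m))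
            = q * (1-q)^(N-1) := by
        intro i
        rw [integral_pi_prod]
        have hv : ∀ j, ∫ p, hfun B i j p ∂m = if j = i then q else 1 - q := by
          intro j
          by_cases h : j = i
          · simp only [hfun, if_pos h]
            rw [int_one m B hB]
          · simp only [hfun, if_neg h]
            rw [int_zero_one m B hB]
        rw [Finset.prod_congr rfl fun j _ => hv j]
        rw [← Finset.mul_prod_erase Finset.univ _ (Finset.mem_univ i), if_pos rfl]
        congr 1
        have : ∀ j ∈ Finset.univ.erase i,
            (if j = i then q else 1 - q) = 1 - q := fun j hj =>
          if_neg (Finset.ne_of_mem_erase hj)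
        rw [Finset.prod_congr rfl this, Finset.prod_const, Finset.card_erase_of_mem
          (Finset.mem_univ i), Finset.card_univ, Fintype.card_fin]
      rw [Finset.sum_congr rfl fun i _ => hval i, Finset.sum_const, Finset.card_univ,
        Fintype.card_fin, nsmul_eq_mul]
    rw [hint2]
    -- first integral
    have hpt : ∀ ω : Fin N → ℝ × ℝ,
        (if 2 ≤ (binIdx B ω).card then ((binIdx B ω).card : ℝ) / N * ubar B ω else 0)
          = ∑ i, ∑ i' ∈ Finset.univ.erase i,
              ∑ S ∈ ((Finset.univ.erase i).erase i').powerset,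
                (1 / (N * (S.card + 1)) : ℝ) * ∏ j, gfun B i i' S j (ω j) := by
      intro ω
      rw [pointwiseU]
      exact Finset.sum_congr rfl fun i _ => Finset.sum_congr rfl fun i' hi' =>
        (pairEq B ω i i' (Finset.ne_of_mem_erase hi')).symm
    rw [integral_congr_ae (Filter.Eventually.of_forall hpt)]
    have hintg : ∀ (i i' : Fin N) (S : Finset (Fin N)),
        Integrable (fun ω : Fin N → ℝ × ℝ =>
          (1 / (N * (S.card + 1)) : ℝ) * ∏ j, gfun B i i' S j (ω j))
          (Measure.pi fun _ : Fin N => m) :=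
      fun i i' S => (integrable_gfun_prod m B hB hm i i' S).const_mul _
    rw [integral_finset_sum _ (fun i _ => integrable_finset_sum _
      (fun i' _ => integrable_finset_sum _ (fun S _ => hintg i i' S)))]
    have hsumval : ∀ i : Fin N, ∀ i' ∈ Finset.univ.erase i,
        (∫ ω : Fin N → ℝ × ℝ, ∑ S ∈ ((Finset.univ.erase i).erase i').powerset,
            (1 / (N * (S.card + 1)) : ℝ) * ∏ j, gfun B i i' S j (ω j)
          ∂(Measure.pi fun _ : Fin N => m))
        = ∑ k ∈ Finset.range (N - 2 + 1), ((N-2).choose k : ℝ)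
            * ((1 / (N * (k + 1)) : ℝ) * (A ^ 2 * q ^ k * (1-q) ^ (N - 2 - k))) := by
      intro i i' hi'
      have hne : i' ≠ i := Finset.ne_of_mem_erase hi'
      rw [integral_finset_sum _ (fun S _ => hintg i i' S)]
      have hterm : ∀ S ∈ ((Finset.univ.erase i).erase i').powerset,
          (∫ ω : Fin N → ℝ × ℝ, (1 / (N * (S.card + 1)) : ℝ) * ∏ j, gfun B i i' S j (ω j)
            ∂(Measure.pi fun _ : Fin N => m))
          = (1 / (N * (S.card + 1)) : ℝ) * (A ^ 2 * q ^ S.card * (1-q) ^ (N - 2 - S.card)) := by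
        intro S hS
        rw [integral_const_mul, integral_gfun_prod m B hB i i' hne S (Finset.mem_powerset.1 hS)]
      rw [Finset.sum_congr rfl hterm]
      have hbc : ((Finset.univ.erase i).erase i').card = N - 2 := by
        rw [Finset.card_erase_of_mem (Finset.mem_erase.2 ⟨hne, Finset.mem_univ i'⟩),
          Finset.card_erase_of_mem (Finset.mem_univ i), Finset.card_univ, Fintype.card_fin]
        omega
      have hps := sum_powerset_card ((Finset.univ.erase i).erase i')
        (fun k : ℕ => (1 / (N * (k + 1)) : ℝ) * (A ^ 2 * q ^ k * (1-q) ^ (N - 2 - k)))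
      rw [hbc] at hps
      exact hps
    -- now a pure computation
    set W : ℝ := ∑ k ∈ Finset.range (N - 2 + 1), ((N-2).choose k : ℝ)
        * ((1 / (N * (k + 1)) : ℝ) * (A ^ 2 * q ^ k * (1-q) ^ (N - 2 - k))) with hW
    have hsumval2 : ∀ i : Fin N,
        (∫ ω : Fin N → ℝ × ℝ, ∑ i' ∈ Finset.univ.erase i,
            ∑ S ∈ ((Finset.univ.erase i).erase i').powerset,
              (1 / (N * (S.card + 1)) : ℝ) * ∏ j, gfun B i i' S j (ω j)
          ∂(Measure.pi fun _ : Fin N => m))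
        = ∑ _i' ∈ Finset.univ.erase i, W := by
      intro i
      rw [integral_finset_sum _ (fun i' _ => integrable_finset_sum _ (fun S _ => hintg i i' S))]
      exact Finset.sum_congr rfl (hsumval i)
    have hstep : (∑ i : Fin N,
        ∫ ω : Fin N → ℝ × ℝ, ∑ i' ∈ Finset.univ.erase i,
            ∑ S ∈ ((Finset.univ.erase i).erase i').powerset,
              (1 / (N * (S.card + 1)) : ℝ) * ∏ j, gfun B i i' S j (ω j)
          ∂(Measure.pi fun _ : Fin N => m))
        = ∑ _i : Fin N, ∑ _i' ∈ Finset.univ.erase _i, W :=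
      Finset.sum_congr rfl fun i _ => hsumval2 i
    rw [hstep]
    have hcard : ∀ i : Fin N, (Finset.univ.erase i).card = N - 1 := fun i => by
      rw [Finset.card_erase_of_mem (Finset.mem_univ i), Finset.card_univ, Fintype.card_fin]
    have hsum2 : (∑ _i : Fin N, ∑ _i' ∈ Finset.univ.erase _i, W) = ((N * (N-1) : ℕ) : ℝ) * W := by
      simp only [Finset.sum_const, hcard, Finset.card_univ, Fintype.card_fin, smul_smul,
        nsmul_eq_mul]
      push_cast
      ring
    rw [hsum2]
    -- case split on N
    rcases Nat.lt_or_ge N 2 with hN2 | hN2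
    · interval_cases N
      · simp
    · -- N ≥ 2
      have hq' : q ≠ 0 := hq0.ne'
      have hNc : ((N * (N-1) : ℕ) : ℝ) = (N:ℝ) * ((N:ℝ) - 1) := by
        push_cast [Nat.cast_sub (by omega : 1 ≤ N)]
        ring
      have hWeq : W = (A^2 / (N:ℝ)) * ((1 - (1-q)^(N-1)) / (((N:ℝ)-1) * q)) := by
        rw [hW]
        have : ∀ k ∈ Finset.range (N - 2 + 1), ((N-2).choose k : ℝ)
            * ((1 / (N * (k + 1)) : ℝ) * (A ^ 2 * q ^ k * (1-q) ^ (N - 2 - k)))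
            = (A^2 / (N:ℝ)) * (((N-2).choose k : ℝ) * q ^ k * (1-q) ^ (N-2-k) / ((k:ℝ) + 1)) := by
          intro k _
          have hk1 : ((k:ℝ) + 1) ≠ 0 := by positivity
          field_simp
        rw [Finset.sum_congr rfl this, ← Finset.mul_sum, binom_aux (N-2) q hq']
        have h1 : (N - 2 + 1 : ℕ) = N - 1 := by omega
        have h2 : (((N:ℕ) - 2 : ℕ) : ℝ) + 1 = (N:ℝ) - 1 := by
          push_cast [Nat.cast_sub (by omega : 2 ≤ N)]
          ring
        rw [h1, h2]
      rw [hWeq, hNc]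
      have hN1 : ((N:ℝ) - 1) ≠ 0 := by
        have : (2:ℝ) ≤ (N:ℝ) := by exact_mod_cast hN2
        linarith
      field_simp
end

section
/- Let Y | X ∼ Cat(Q(X)) with Q measurable into Δ^{K−1}, Z = f(X), fix a class index k, and let B_{k1},…,B_{kB} be a measurable partition of [0,1] with P(Z_k ∈ B_{kb}) > 0 for each b. Define the bin-wise quantities C̄_{kb} = E[Y_k | Z_k ∈ B_{kb}], Z̄_{kb} = E[Z_k | Z_k ∈ B_{kb}], the epistemic loss component EL_k = E[(Q_k − Z_k)²], and the binned calibration loss CL_k(B) = Σ_b P(Z_k ∈ B_{kb}) (C̄_{kb} − Z̄_{kb})². Then the dispersion loss DL_k(B) := EL_k − CL_k(B) satisfies DL_k(B) = Σ_b P(Z_k ∈ B_{kb}) · E[ ((Q_k − C̄_{kb}) − (Z_k − Z̄_{kb}))² | Z_k ∈ B_{kb} ], and in particular every bin-wise summand is nonnegative, so DL_k(B) ≥ 0. -/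
open MeasureTheory

/-- dispersion-loss decomposition: with `Y | X ∼ Cat(Q(X))`, `Z = f(X)`,
a class `k₀`, and a measurable partition `B_1,…,B_B` of `[0,1]` with positive masses, the
dispersion loss `DL_k(𝓑) = EL_k - CL_k(𝓑)` equals
`∑_b P(Z_k ∈ B_b) E[((Q_k - C̄_b) - (Z_k - Z̄_b))² | Z_k ∈ B_b]`; each bin-wise summand is
nonnegative, so `DL_k(𝓑) ≥ 0`. -/
theorem stmt8
    {Ω 𝒳 : Type*} [MeasurableSpace Ω] [MeasurableSpace 𝒳]
    (μ : Measure Ω) [IsProbabilityMeasure μ]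
    (K : ℕ) (k₀ : Fin K)
    (X : Ω → 𝒳) (hX : Measurable X)
    -- `Y` is a one-hot valued label
    (Y : Ω → Fin K → ℝ) (hY : Measurable Y)
    (hYoh : ∀ ω, ∃ k, Y ω = oneHot K k)
    -- instance-wise class probability `Q`, measurable into the simplex
    (Q : 𝒳 → Fin K → ℝ) (hQ : Measurable Q)
    (hQΔ : ∀ x, Q x ∈ stdSimplex ℝ (Fin K))
    -- conditional label distribution: `Y | X ∼ Cat(Q(X))`
    (hcond : ∀ k, μ[fun ω => Y ω k | MeasurableSpace.comap X inferInstance]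
      =ᵐ[μ] fun ω => Q (X ω) k)
    -- `f` is a measurable map into the probability simplex, `Z = f(X)`
    (f : 𝒳 → Fin K → ℝ) (hf : Measurable f)
    (hfΔ : ∀ x, f x ∈ stdSimplex ℝ (Fin K))
    -- a measurable partition of `[0,1]` into `Bn` bins, each of positive probability
    (Bn : ℕ) (bins : Fin Bn → Set ℝ)
    (hbmeas : ∀ b, MeasurableSet (bins b))
    (hbdisj : ∀ b b', b ≠ b' → Disjoint (bins b) (bins b'))
    (hbcover : (⋃ b, bins b) = Set.Icc (0 : ℝ) 1)
    (hbpos : ∀ b, 0 < μ {ω | f (X ω) k₀ ∈ bins b})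
    -- bin probabilities, bin-conditional means of `Y_k` and `Z_k`,
    -- epistemic loss and binned calibration loss
    (Pb : Fin Bn → ℝ) (hPb : ∀ b, Pb b = (μ {ω | f (X ω) k₀ ∈ bins b}).toReal)
    (Cbar : Fin Bn → ℝ)
    (hCbar : ∀ b, Cbar b = (∫ ω in {ω | f (X ω) k₀ ∈ bins b}, Y ω k₀ ∂μ) / Pb b)
    (Zbar : Fin Bn → ℝ)
    (hZbar : ∀ b, Zbar b = (∫ ω in {ω | f (X ω) k₀ ∈ bins b}, f (X ω) k₀ ∂μ) / Pb b)
    (ELk : ℝ) (hELk : ELk = ∫ ω, (Q (X ω) k₀ - f (X ω) k₀) ^ 2 ∂μ)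
    (CLk : ℝ) (hCLk : CLk = ∑ b, Pb b * (Cbar b - Zbar b) ^ 2) :
    (ELk - CLk
        = ∑ b, Pb b *
          ((∫ ω in {ω | f (X ω) k₀ ∈ bins b},
              ((Q (X ω) k₀ - Cbar b) - (f (X ω) k₀ - Zbar b)) ^ 2 ∂μ) / Pb b))
      ∧ (∀ b, 0 ≤ Pb b *
          ((∫ ω in {ω | f (X ω) k₀ ∈ bins b},
              ((Q (X ω) k₀ - Cbar b) - (f (X ω) k₀ - Zbar b)) ^ 2 ∂μ) / Pb b))
      ∧ 0 ≤ ELk - CLk := by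
  classical
  have hZkm : Measurable fun ω => f (X ω) k₀ :=
    (measurable_pi_apply k₀).comp (hf.comp hX)
  have hQkm : Measurable fun ω => Q (X ω) k₀ :=
    (measurable_pi_apply k₀).comp (hQ.comp hX)
  have hYkm : Measurable fun ω => Y ω k₀ :=
    (measurable_pi_apply k₀).comp hY
  -- bounds
  have hcoord : ∀ (g : Fin K → ℝ), g ∈ stdSimplex ℝ (Fin K) → 0 ≤ g k₀ ∧ g k₀ ≤ 1 := by
    intro g hg
    refine ⟨hg.1 k₀, ?_⟩
    have := Finset.single_le_sum (fun i _ => hg.1 i) (Finset.mem_univ k₀)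
    simpa [hg.2] using this
  have hZb : ∀ ω, |f (X ω) k₀| ≤ 1 := fun ω => by
    have h := hcoord _ (hfΔ (X ω)); rw [abs_le]; constructor <;> linarith [h.1, h.2]
  have hQb : ∀ ω, |Q (X ω) k₀| ≤ 1 := fun ω => by
    have h := hcoord _ (hQΔ (X ω)); rw [abs_le]; constructor <;> linarith [h.1, h.2]
  have hYb : ∀ ω, |Y ω k₀| ≤ 1 := by
    intro ω
    obtain ⟨k, hk⟩ := hYoh ω
    rw [hk]
    simp only [oneHot, Pi.single_apply]
    split <;> simp
  -- integrability helper
  have hIntC : ∀ (g : Ω → ℝ) (C : ℝ), Measurable g → (∀ ω, |g ω| ≤ C) → Integrable g μ := by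
    intro g C hg hb
    exact ⟨hg.aestronglyMeasurable,
      HasFiniteIntegral.of_bounded (C := C) (ae_of_all μ fun ω => by
        simpa [Real.norm_eq_abs] using hb ω)⟩
  have hYint : Integrable (fun ω => Y ω k₀) μ := hIntC _ 1 hYkm hYb
  have hZint : Integrable (fun ω => f (X ω) k₀) μ := hIntC _ 1 hZkm hZb
  have hQint : Integrable (fun ω => Q (X ω) k₀) μ := hIntC _ 1 hQkm hQb
  -- bins
  set A : Fin Bn → Set Ω := fun b => {ω | f (X ω) k₀ ∈ bins b} with hAdef
  have hAm : ∀ b, MeasurableSet (A b) := fun b => hZkm (hbmeas b)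
  have hPbpos : ∀ b, 0 < Pb b := by
    intro b
    rw [hPb]
    exact ENNReal.toReal_pos (hbpos b).ne' (measure_ne_top μ _)
  have hPbA : ∀ b, Pb b = (μ (A b)).toReal := hPb
  -- conditional expectation: ∫_{A b} Y = ∫_{A b} Q∘X
  have hm : MeasurableSpace.comap X inferInstance ≤ (inferInstance : MeasurableSpace Ω) :=
    hX.comap_le
  have hYQ : ∀ b, (∫ ω in A b, Y ω k₀ ∂μ) = ∫ ω in A b, Q (X ω) k₀ ∂μ := by
    intro b
    have hmsA : MeasurableSet[MeasurableSpace.comap X inferInstance] (A b) :=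
      ⟨{x | f x k₀ ∈ bins b}, ((measurable_pi_apply k₀).comp hf) (hbmeas b), rfl⟩
    calc (∫ ω in A b, Y ω k₀ ∂μ)
        = ∫ ω in A b, (μ[fun ω => Y ω k₀ | MeasurableSpace.comap X inferInstance]) ω ∂μ :=
          (setIntegral_condExp hm hYint hmsA).symm
      _ = ∫ ω in A b, Q (X ω) k₀ ∂μ :=
          integral_congr_ae (ae_restrict_of_ae (hcond k₀))
  -- bin means
  have hQmean : ∀ b, (∫ ω in A b, Q (X ω) k₀ ∂μ) = Cbar b * Pb b := by
    intro b
    rw [hCbar b, ← hYQ b, div_mul_cancel₀ _ (hPbpos b).ne']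
  have hZmean : ∀ b, (∫ ω in A b, f (X ω) k₀ ∂μ) = Zbar b * Pb b := by
    intro b
    rw [hZbar b, div_mul_cancel₀ _ (hPbpos b).ne']
  -- centered function has zero mean on each bin
  have hg0 : ∀ b, (∫ ω in A b, ((Q (X ω) k₀ - Cbar b) - (f (X ω) k₀ - Zbar b)) ∂μ) = 0 := by
    intro b
    have h1 : (∫ ω in A b, ((Q (X ω) k₀ - Cbar b) - (f (X ω) k₀ - Zbar b)) ∂μ)
        = (∫ ω in A b, Q (X ω) k₀ ∂μ) - (∫ ω in A b, f (X ω) k₀ ∂μ)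
          - (Cbar b - Zbar b) * Pb b := by
      have e1 : ∀ ω, ((Q (X ω) k₀ - Cbar b) - (f (X ω) k₀ - Zbar b))
          = (Q (X ω) k₀ - f (X ω) k₀) - (Cbar b - Zbar b) := fun ω => by ring
      have h2 : (∫ ω in A b, ((Q (X ω) k₀ - f (X ω) k₀) - (Cbar b - Zbar b)) ∂μ)
          = (∫ ω in A b, (Q (X ω) k₀ - f (X ω) k₀) ∂μ)
            - (∫ _ω in A b, (Cbar b - Zbar b) ∂μ) :=
        integral_sub ((hQint.sub hZint).integrableOn)
          (integrableOn_const (measure_lt_top μ _).ne)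
      have h3 : (∫ ω in A b, (Q (X ω) k₀ - f (X ω) k₀) ∂μ)
          = (∫ ω in A b, Q (X ω) k₀ ∂μ) - (∫ ω in A b, f (X ω) k₀ ∂μ) :=
        integral_sub hQint.integrableOn hZint.integrableOn
      rw [integral_congr_ae (ae_of_all _ fun ω => e1 ω), h2, h3, setIntegral_const, measureReal_def, hPbA b]
      simp [smul_eq_mul]
      ring
    rw [h1, hQmean b, hZmean b]
    ring
  -- per-bin decomposition
  have hbinInt : ∀ b, Integrable
      (fun ω => ((Q (X ω) k₀ - Cbar b) - (f (X ω) k₀ - Zbar b))) μ := by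
    intro b
    exact ((hQint.sub (integrable_const _)).sub (hZint.sub (integrable_const _)))
  have hbinIntSq : ∀ b, Integrable
      (fun ω => ((Q (X ω) k₀ - Cbar b) - (f (X ω) k₀ - Zbar b)) ^ 2) μ := by
    intro b
    refine hIntC _ ((2 + |Cbar b| + |Zbar b|) ^ 2) (by fun_prop) ?_
    intro ω
    have h1 : |(Q (X ω) k₀ - Cbar b) - (f (X ω) k₀ - Zbar b)| ≤ 2 + |Cbar b| + |Zbar b| := by
      have := hQb ω; have := hZb ω
      have h2 := abs_sub_abs_le_abs_sub (Q (X ω) k₀) (Cbar b)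
      calc |(Q (X ω) k₀ - Cbar b) - (f (X ω) k₀ - Zbar b)|
          ≤ |Q (X ω) k₀ - Cbar b| + |f (X ω) k₀ - Zbar b| := abs_sub _ _
        _ ≤ (|Q (X ω) k₀| + |Cbar b|) + (|f (X ω) k₀| + |Zbar b|) := by
            gcongr <;> exact abs_sub _ _
        _ ≤ 2 + |Cbar b| + |Zbar b| := by linarith [hQb ω, hZb ω]
    rw [abs_pow]
    exact pow_le_pow_left₀ (abs_nonneg _) h1 2
  have hELsq : Integrable (fun ω => (Q (X ω) k₀ - f (X ω) k₀) ^ 2) μ := by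
    refine hIntC _ 4 (by fun_prop) ?_
    intro ω
    rw [abs_pow]
    have h1 : |Q (X ω) k₀ - f (X ω) k₀| ≤ 2 := by
      calc |Q (X ω) k₀ - f (X ω) k₀| ≤ |Q (X ω) k₀| + |f (X ω) k₀| := abs_sub _ _
        _ ≤ 2 := by linarith [hQb ω, hZb ω]
    nlinarith [abs_nonneg (Q (X ω) k₀ - f (X ω) k₀)]
  have hdecomp : ∀ b, (∫ ω in A b, (Q (X ω) k₀ - f (X ω) k₀) ^ 2 ∂μ)
      = (∫ ω in A b, ((Q (X ω) k₀ - Cbar b) - (f (X ω) k₀ - Zbar b)) ^ 2 ∂μ)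
        + Pb b * (Cbar b - Zbar b) ^ 2 := by
    intro b
    have e1 : ∀ ω, (Q (X ω) k₀ - f (X ω) k₀) ^ 2
        = ((Q (X ω) k₀ - Cbar b) - (f (X ω) k₀ - Zbar b)) ^ 2
          + (2 * (Cbar b - Zbar b)) * ((Q (X ω) k₀ - Cbar b) - (f (X ω) k₀ - Zbar b))
          + (Cbar b - Zbar b) ^ 2 := fun ω => by ring
    have h2 : (∫ ω in A b, (((Q (X ω) k₀ - Cbar b) - (f (X ω) k₀ - Zbar b)) ^ 2
          + (2 * (Cbar b - Zbar b)) * ((Q (X ω) k₀ - Cbar b) - (f (X ω) k₀ - Zbar b))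
          + (Cbar b - Zbar b) ^ 2) ∂μ)
        = (∫ ω in A b, (((Q (X ω) k₀ - Cbar b) - (f (X ω) k₀ - Zbar b)) ^ 2
            + (2 * (Cbar b - Zbar b)) * ((Q (X ω) k₀ - Cbar b) - (f (X ω) k₀ - Zbar b))) ∂μ)
          + (∫ _ω in A b, (Cbar b - Zbar b) ^ 2 ∂μ) :=
      integral_add (((hbinIntSq b).integrableOn).add (((hbinInt b).integrableOn).const_mul _))
        (integrableOn_const (measure_lt_top μ _).ne)
    have h3 : (∫ ω in A b, (((Q (X ω) k₀ - Cbar b) - (f (X ω) k₀ - Zbar b)) ^ 2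
          + (2 * (Cbar b - Zbar b)) * ((Q (X ω) k₀ - Cbar b) - (f (X ω) k₀ - Zbar b))) ∂μ)
        = (∫ ω in A b, ((Q (X ω) k₀ - Cbar b) - (f (X ω) k₀ - Zbar b)) ^ 2 ∂μ)
          + (∫ ω in A b, (2 * (Cbar b - Zbar b))
              * ((Q (X ω) k₀ - Cbar b) - (f (X ω) k₀ - Zbar b)) ∂μ) :=
      integral_add ((hbinIntSq b).integrableOn) (((hbinInt b).integrableOn).const_mul _)
    have h4 : (∫ ω in A b, (2 * (Cbar b - Zbar b))
          * ((Q (X ω) k₀ - Cbar b) - (f (X ω) k₀ - Zbar b)) ∂μ)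
        = (2 * (Cbar b - Zbar b))
          * (∫ ω in A b, ((Q (X ω) k₀ - Cbar b) - (f (X ω) k₀ - Zbar b)) ∂μ) :=
      integral_const_mul _ _
    rw [integral_congr_ae (ae_of_all _ fun ω => e1 ω), h2, h3, h4, hg0 b,
      setIntegral_const, measureReal_def, ← hPbA b]
    simp [smul_eq_mul]
  -- total: sum over bins
  have hcoverΩ : (⋃ b, A b) = Set.univ := by
    apply Set.eq_univ_of_forall
    intro ω
    have hmem : f (X ω) k₀ ∈ Set.Icc (0:ℝ) 1 := by
      have h := hcoord _ (hfΔ (X ω)); exact ⟨h.1, h.2⟩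
    rw [← hbcover] at hmem
    obtain ⟨s, ⟨b, rfl⟩, hs⟩ := hmem
    exact Set.mem_iUnion.2 ⟨b, hs⟩
  have hsum : ELk = ∑ b, ∫ ω in A b, (Q (X ω) k₀ - f (X ω) k₀) ^ 2 ∂μ := by
    rw [hELk, ← setIntegral_univ, ← hcoverΩ]
    exact integral_iUnion_fintype hAm
      (fun b b' hne => Set.disjoint_left.2 fun ω h1 h2 =>
        Set.disjoint_left.1 (hbdisj b b' hne) h1 h2)
      (fun b => hELsq.integrableOn)
  -- the main equality
  have hmain : ELk - CLk = ∑ b, Pb b *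
      ((∫ ω in A b, ((Q (X ω) k₀ - Cbar b) - (f (X ω) k₀ - Zbar b)) ^ 2 ∂μ) / Pb b) := by
    rw [hsum, hCLk, ← Finset.sum_sub_distrib]
    apply Finset.sum_congr rfl
    intro b _
    rw [hdecomp b, mul_div_cancel₀ _ (hPbpos b).ne']
    ring
  refine ⟨hmain, ?_, ?_⟩
  · intro b
    apply mul_nonneg (hPbpos b).le
    apply div_nonneg _ (hPbpos b).le
    exact setIntegral_nonneg (hAm b) (fun ω _ => sq_nonneg _)
  · rw [hmain]
    apply Finset.sum_nonneg
    intro b _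
    apply mul_nonneg (hPbpos b).le
    apply div_nonneg _ (hPbpos b).le
    exact setIntegral_nonneg (hAm b) (fun ω _ => sq_nonneg _)
end
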